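/- arXiv:1810.03646 — 10 statements merged into one kernel-verified Lean document; each statement's English description precedes it below -/
import Mathlib

section
/- Let k be a field and K a field extension of k of degree d with basis u_1,…,u_d over k. For every polynomial F ∈ K[x_1,…,x_n] there exists a unique d-tuple (f_1,…,f_d) of polynomials in k[y_{tj} : 1≤t≤n, 1≤j≤d] such that F(Σ_{j=1}^d y_{1j}u_j, …, Σ_{j=1}^d y_{nj}u_j) = Σ_{i=1}^d f_i·u_i holds in K[y_{tj} : 1≤t≤n, 1≤j≤d] (where each f_i is viewed in K[y_{tj}] via the inclusion k ⊆ K). -/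
open MvPolynomial

/-- Existence and uniqueness of the Weil descent of a polynomial
`F ∈ K[x_1,…,x_n]` with respect to a basis `u` of `K` over `k`. -/
theorem stmt_0 {k K : Type*} [Field k] [Field K] [Algebra k K]
    (n d : ℕ) (u : Module.Basis (Fin d) k K) (F : MvPolynomial (Fin n) K) :
    ∃! f : Fin d → MvPolynomial (Fin n × Fin d) k,
      aeval (fun t : Fin n => ∑ j : Fin d, C (u j) * X (t, j)) F
        = ∑ i : Fin d, C (u i) * MvPolynomial.map (algebraMap k K) (f i) := by
  set G := aeval (fun t : Fin n => ∑ j : Fin d, C (u j) * X (t, j)) F with hG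
  have key : ∀ f : Fin d → MvPolynomial (Fin n × Fin d) k,
      ∀ m : (Fin n × Fin d) →₀ ℕ,
      coeff m (∑ i : Fin d, C (u i) * MvPolynomial.map (algebraMap k K) (f i))
        = ∑ i : Fin d, coeff m (f i) • u i := by
    intro f m
    rw [coeff_sum]
    refine Finset.sum_congr rfl fun i _ => ?_
    rw [coeff_C_mul, coeff_map, Algebra.smul_def, mul_comm]
  have hf : G = ∑ i : Fin d, C (u i) * MvPolynomial.map (algebraMap k K)
      (∑ m ∈ G.support, monomial m (u.repr (coeff m G) i)) := by
    apply MvPolynomial.ext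
    intro m
    have hc : ∀ i : Fin d,
        coeff m (∑ m' ∈ G.support, monomial m' (u.repr (coeff m' G) i))
          = u.repr (coeff m G) i := by
      intro i
      rw [coeff_sum]
      by_cases hm : m ∈ G.support
      · rw [Finset.sum_eq_single m]
        · simp [coeff_monomial]
        · intro b _ hb; simp [coeff_monomial, hb]
        · intro h; exact absurd hm h
      · rw [Finset.sum_eq_zero]
        · rw [MvPolynomial.notMem_support_iff.mp hm]; simp
        · intro b hb
          have : b ≠ m := fun h => hm (h ▸ hb)
          simp [coeff_monomial, this]
    rw [key]
    simp_rw [hc]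
    exact (u.sum_repr (coeff m G)).symm
  refine ⟨fun i => ∑ m ∈ G.support, monomial m (u.repr (coeff m G) i), hf, ?_⟩
  · intro g hg
    funext i
    apply MvPolynomial.ext
    intro m
    have h1 : ∑ j : Fin d, coeff m (g j) • u j
        = ∑ j : Fin d,
            coeff m (∑ m' ∈ G.support, monomial m' (u.repr (coeff m' G) j)) • u j := by
      rw [← key, ← key, ← hg, ← hf]
    have h2 := u.equivFun.symm.injective (a₁ := fun j => coeff m (g j))
      (a₂ := fun j => coeff m (∑ m' ∈ G.support, monomial m' (u.repr (coeff m' G) j)))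
      (by rw [Module.Basis.equivFun_symm_apply, Module.Basis.equivFun_symm_apply]; exact h1)
    exact congrFun h2 i
end

section
/- Let k be a finite field with q elements, K = F_{q^d} the extension of k of degree d with basis u_1,…,u_d over k, and k̄ an algebraic closure of k containing K. Let σ: k̄ → k̄ be the q-power Frobenius x ↦ x^q. Let F ∈ K[x_1,…,x_n] with descent (f_1,…,f_d), and for 0 ≤ j ≤ d−1 let F^{σ^j} be the polynomial obtained from F by applying σ^j to every coefficient. Then for every j ∈ {0,…,d−1} and every point β = (β_1,…,β_n) ∈ (k̄^d)^n: F^{σ^j}(δ^{σ^j}(β_1),…,δ^{σ^j}(β_n)) = Σ_{i=1}^d f_i(β)·σ^j(u_i), where δ^{σ^j}(x_1,…,x_d) = Σ_{i=1}^d x_i σ^j(u_i). In particular (j = 0), F(δ(β_1),…,δ(β_n)) = Σ_i f_i(β)u_i for all β, i.e. F∘δ = δ∘F̂ as functions on k̄^{nd}. -/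
open MvPolynomial

/-- Twisted compatibility of the descent with the Frobenius:
for every `j` and every point `β ∈ (k̄^d)^n`,
`F^{σ^j}(δ^{σ^j}(β_1),…,δ^{σ^j}(β_n)) = Σ_i f_i(β)·σ^j(u_i)`. -/
theorem stmt_2 {k K kbar : Type*} [Field k] [Fintype k] [Field K] [Field kbar]
    [Algebra k K] [Algebra K kbar] [Algebra k kbar] [IsScalarTower k K kbar]
    [IsAlgClosure k kbar]
    (σ : RingAut kbar) (hσ : ∀ x : kbar, σ x = x ^ Fintype.card k)
    (n d : ℕ) (u : Module.Basis (Fin d) k K) (F : MvPolynomial (Fin n) K)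
    (f : Fin d → MvPolynomial (Fin n × Fin d) k)
    (hf : aeval (fun t : Fin n => ∑ j : Fin d, C (u j) * X (t, j)) F
        = ∑ i : Fin d, C (u i) * MvPolynomial.map (algebraMap k K) (f i)) :
    ∀ j : Fin d, ∀ β : Fin n × Fin d → kbar,
      eval₂ ((σ ^ (j : ℕ)).toRingHom.comp (algebraMap K kbar))
        (fun t : Fin n => ∑ i : Fin d, β (t, i) * (σ ^ (j : ℕ)) (algebraMap K kbar (u i))) F
      = ∑ i : Fin d,
          eval₂ (algebraMap k kbar) β (f i) * (σ ^ (j : ℕ)) (algebraMap K kbar (u i)) := by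
  intro j β
  set m := (j : ℕ) with hm
  set φ : K →+* kbar := (σ ^ m).toRingHom.comp (algebraMap K kbar) with hφ
  -- σ^m fixes the image of k
  have hfix : ∀ c : k, φ (algebraMap k K c) = algebraMap k kbar c := by
    intro c
    have h1 : (algebraMap K kbar) (algebraMap k K c) = algebraMap k kbar c :=
      (IsScalarTower.algebraMap_apply k K kbar c).symm
    have h2 : ∀ m : ℕ, (σ ^ m) (algebraMap k kbar c) = algebraMap k kbar c := by
      intro m
      induction m with
      | zero => rfl
      | succ m ih =>
        rw [pow_succ]
        have hone : σ (algebraMap k kbar c) = algebraMap k kbar c := by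
          rw [hσ, ← map_pow, FiniteField.pow_card]
        show (σ ^ m) (σ (algebraMap k kbar c)) = algebraMap k kbar c
        rw [hone, ih]
    simp only [hφ, RingHom.coe_comp, Function.comp_apply, h1]
    exact h2 m
  have hcomp : φ.comp (algebraMap k K) = algebraMap k kbar := RingHom.ext hfix
  -- apply eval₂Hom φ β to hf
  have key := congrArg (eval₂Hom φ β) hf
  have hb : aeval (fun t : Fin n => ∑ j : Fin d, C (u j) * X (t, j)) F
      = bind₁ (fun t : Fin n => ∑ j : Fin d, C (u j) * X (t, j)) F := rfl
  rw [hb, hom_bind₁] at key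
  have hC : (eval₂Hom φ β).comp (C : K →+* MvPolynomial (Fin n × Fin d) K) = φ := by
    ext x
    simp
  rw [hC] at key
  have hg : (fun t : Fin n => eval₂Hom φ β (∑ j : Fin d, C (u j) * X (t, j)))
      = fun t : Fin n => ∑ i : Fin d, β (t, i) * (σ ^ m) (algebraMap K kbar (u i)) := by
    funext t
    simp only [map_sum, map_mul, eval₂Hom_C, eval₂Hom_X']
    refine Finset.sum_congr rfl fun i _ => ?_
    rw [mul_comm]
    rfl
  rw [hg] at key
  simp only [map_sum, map_mul, eval₂Hom_C] at key
  have hmap : ∀ i : Fin d,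
      eval₂Hom φ β (MvPolynomial.map (algebraMap k K) (f i))
        = eval₂ (algebraMap k kbar) β (f i) := by
    intro i
    rw [coe_eval₂Hom, eval₂_map, hcomp]
  calc eval₂ ((σ ^ m).toRingHom.comp (algebraMap K kbar))
        (fun t : Fin n => ∑ i : Fin d, β (t, i) * (σ ^ m) (algebraMap K kbar (u i))) F
      = eval₂Hom φ (fun t : Fin n => ∑ i : Fin d, β (t, i) * (σ ^ m) (algebraMap K kbar (u i))) F := rfl
    _ = ∑ i : Fin d, φ (u i) * eval₂Hom φ β (MvPolynomial.map (algebraMap k K) (f i)) := key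
    _ = ∑ i : Fin d, eval₂ (algebraMap k kbar) β (f i) * (σ ^ m) (algebraMap K kbar (u i)) := by
        refine Finset.sum_congr rfl fun i _ => ?_
        rw [hmap i, mul_comm]
        rfl
end

section
/- Let k be a finite field with q elements, K = F_{q^d} ⊆ k̄ the degree-d extension of k in an algebraic closure k̄, u_1,…,u_d a basis of K over k, and σ the q-power Frobenius of k̄. Let F_1,…,F_m ∈ K[x_1,…,x_n], let V^{σ^j}(k̄) = {γ ∈ k̄^n : F_t^{σ^j}(γ) = 0 for all t} where F_t^{σ^j} applies σ^j to the coefficients of F_t, and let V̂(k̄) = {β ∈ (k̄^d)^n : f_{ti}(β) = 0 for all t, i}, where (f_{t1},…,f_{td}) is the descent of F_t. Then the map β = (β_1,…,β_n) ↦ ((δ^{σ^j}(β_1),…,δ^{σ^j}(β_n)))_{j=0}^{d-1}, with δ^{σ^j}(x_1,…,x_d) = Σ_i x_i σ^j(u_i), restricts to a bijection from V̂(k̄) onto the product ∏_{j=0}^{d-1} V^{σ^j}(k̄). -/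
open MvPolynomial

/-- The map `β ↦ (δ^{σ^j}(β))_{j=0}^{d-1}` restricts to a bijection from
the descent variety `V̂(k̄)` onto the product `∏_{j=0}^{d-1} V^{σ^j}(k̄)`. -/
theorem stmt_4 {k K kbar : Type*} [Field k] [Fintype k] [Field K] [Field kbar]
    [Algebra k K] [Algebra K kbar] [Algebra k kbar] [IsScalarTower k K kbar]
    [IsAlgClosure k kbar]
    (σ : RingAut kbar) (hσ : ∀ x : kbar, σ x = x ^ Fintype.card k)
    (n d m : ℕ) (u : Module.Basis (Fin d) k K)
    (F : Fin m → MvPolynomial (Fin n) K)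
    (f : Fin m → Fin d → MvPolynomial (Fin n × Fin d) k)
    (hf : ∀ t : Fin m,
      aeval (fun s : Fin n => ∑ j : Fin d, C (u j) * X (s, j)) (F t)
        = ∑ i : Fin d, C (u i) * MvPolynomial.map (algebraMap k K) (f t i)) :
    Set.BijOn
      (fun (β : Fin n × Fin d → kbar) (j : Fin d) (t : Fin n) =>
        ∑ i : Fin d, β (t, i) * (σ ^ (j : ℕ)) (algebraMap K kbar (u i)))
      {β : Fin n × Fin d → kbar | ∀ t : Fin m, ∀ i : Fin d,
        eval₂ (algebraMap k kbar) β (f t i) = 0}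
      {γ : Fin d → Fin n → kbar | ∀ j : Fin d, ∀ t : Fin m,
        eval₂ ((σ ^ (j : ℕ)).toRingHom.comp (algebraMap K kbar)) (γ j) (F t) = 0} := by
  classical
  set q := Fintype.card k with hq
  have hq1 : 1 < q := Fintype.one_lt_card
  -- powers of σ are q-power maps
  have hσpow : ∀ (e : ℕ) (x : kbar), (σ ^ e) x = x ^ q ^ e := by
    intro e
    induction e with
    | zero => intro x; rw [pow_zero, pow_zero, pow_one]; rfl
    | succ e ih =>
      intro x
      have : (σ ^ (e + 1)) x = (σ ^ e) (σ x) := by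
        rw [pow_succ]; rfl
      rw [this, ih, hσ, ← pow_mul, ← pow_succ']
  -- σ-powers fix the base field k
  have hfix : ∀ (e : ℕ) (a : k), (σ ^ e) (algebraMap k kbar a) = algebraMap k kbar a := by
    intro e a
    rw [hσpow, ← map_pow, FiniteField.pow_card_pow]
  -- the twisted embeddings
  set τ : Fin d → (K →+* kbar) :=
    fun j => ((σ ^ (j : ℕ)) : RingAut kbar).toRingHom.comp (algebraMap K kbar) with hτ
  have hτapp : ∀ (j : Fin d) (x : K), τ j x = (σ ^ (j : ℕ)) (algebraMap K kbar x) := by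
    intro j x; rfl
  -- K is finite of cardinality q ^ d
  haveI : Fintype K := Module.fintypeOfFintype u
  have hcardK : Fintype.card K = q ^ d := by
    rw [Module.card_fintype u, ← hq, Fintype.card_fin]
  -- distinctness of the τ j
  have hτinj : Function.Injective (fun j : Fin d => (τ j : K →* kbar)) := by
    intro a b hab
    by_contra hne
    have hd2 : 2 ≤ d := by
      by_contra hd
      interval_cases d
      · exact absurd a.2 (by simp)
      · exact hne (Subsingleton.elim a b)
    have hx : ∀ x : K, x ^ q ^ (a : ℕ) = x ^ q ^ (b : ℕ) := by
      intro x
      have hab' : (τ a : K →* kbar) = (τ b : K →* kbar) := hab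
      have h1 : τ a x = τ b x := DFunLike.congr_fun hab' x
      rw [hτapp, hτapp, hσpow, hσpow, ← map_pow, ← map_pow] at h1
      exact (algebraMap K kbar).injective h1
    obtain ⟨g, hg⟩ := IsCyclic.exists_generator (α := Kˣ)
    have hog : orderOf g = q ^ d - 1 := by
      rw [orderOf_eq_card_of_forall_mem_zpowers hg, Nat.card_eq_fintype_card,
        Fintype.card_units, hcardK]
    have hgu : g ^ q ^ (a : ℕ) = g ^ q ^ (b : ℕ) := by
      ext
      push_cast
      exact hx g
    have hmod := pow_eq_pow_iff_modEq.mp hgu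
    rw [hog] at hmod
    have hlt : ∀ j : Fin d, q ^ (j : ℕ) < q ^ d - 1 := by
      intro j
      have h1 : q ^ (j : ℕ) ≤ q ^ (d - 1) := Nat.pow_le_pow_right (by omega) (by omega)
      have h2 : q ^ (d - 1) * 2 ≤ q ^ (d - 1) * q := Nat.mul_le_mul_left _ hq1
      have h3 : q ^ (d - 1) * q = q ^ d := by rw [← pow_succ]; congr 1; omega
      have h4 : q ≤ q ^ (d - 1) := by
        simpa using Nat.pow_le_pow_right (by omega) (show 1 ≤ d - 1 by omega)
      omega
    have : q ^ (a : ℕ) = q ^ (b : ℕ) := by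
      have ha := Nat.mod_eq_of_lt (hlt a)
      have hb := Nat.mod_eq_of_lt (hlt b)
      unfold Nat.ModEq at hmod
      omega
    exact hne (Fin.ext (Nat.pow_right_injective hq1 this))
  -- the Moore matrix
  set M : Matrix (Fin d) (Fin d) kbar :=
    Matrix.of (fun j i : Fin d => (σ ^ (j : ℕ)) (algebraMap K kbar (u i))) with hM
  have hMrows : LinearIndependent kbar (fun j : Fin d => M j) := by
    rw [Fintype.linearIndependent_iff]
    intro c hc
    have hτlin : ∀ (j : Fin d) (a : k) (x : K), τ j (a • x) = a • τ j x := by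
      intro j a x
      rw [Algebra.smul_def, map_mul, Algebra.smul_def]
      congr 1
      rw [hτapp, ← IsScalarTower.algebraMap_apply k K kbar, hfix]
    let L : Fin d → (K →ₗ[k] kbar) := fun j =>
      { toFun := τ j
        map_add' := fun x y => map_add _ x y
        map_smul' := fun a x => hτlin j a x }
    have hsum : (∑ j, c j • L j) = 0 := by
      apply u.ext
      intro i
      have hci := congrFun hc i
      simp only [Finset.sum_apply, Pi.smul_apply, Pi.zero_apply, smul_eq_mul, hM,
        Matrix.of_apply] at hci
      simp only [LinearMap.sum_apply, LinearMap.smul_apply, LinearMap.coe_mk, AddHom.coe_mk,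
        LinearMap.zero_apply, smul_eq_mul, L]
      exact hci
    have hLI : LinearIndependent kbar (fun j : Fin d => ((τ j : K →* kbar) : K → kbar)) :=
      (linearIndependent_monoidHom K kbar).comp _ hτinj
    have hzero : (∑ j, c j • ((τ j : K →* kbar) : K → kbar)) = 0 := by
      funext y
      have hy := LinearMap.congr_fun hsum y
      simp only [LinearMap.sum_apply, LinearMap.smul_apply, LinearMap.coe_mk, AddHom.coe_mk,
        LinearMap.zero_apply, smul_eq_mul, L] at hy
      simpa using hy
    exact Fintype.linearIndependent_iff.mp hLI c hzero
  have hMunit : IsUnit M := by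
    rw [← Matrix.vecMul_injective_iff_isUnit, Matrix.vecMul_injective_iff]
    exact hMrows
  have hMinj : Function.Injective M.mulVec := Matrix.mulVec_injective_iff_isUnit.mpr hMunit
  have hMsurj : Function.Surjective M.mulVec := Matrix.mulVec_surjective_iff_isUnit.mpr hMunit
  -- the key identity coming from the descent relation
  have key : ∀ (β : Fin n × Fin d → kbar) (t : Fin m) (j : Fin d),
      eval₂ ((σ ^ (j : ℕ)).toRingHom.comp (algebraMap K kbar))
        (fun s : Fin n => ∑ i : Fin d, β (s, i) * (σ ^ (j : ℕ)) (algebraMap K kbar (u i))) (F t)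
        = ∑ i : Fin d,
            (σ ^ (j : ℕ)) (algebraMap K kbar (u i)) * eval₂ (algebraMap k kbar) β (f t i) := by
    intro β t j
    set φ : K →+* kbar := (σ ^ (j : ℕ)).toRingHom.comp (algebraMap K kbar) with hφ
    have hφapp : ∀ x : K, φ x = (σ ^ (j : ℕ)) (algebraMap K kbar x) := fun x => rfl
    have hφk : φ.comp (algebraMap k K) = algebraMap k kbar := by
      ext a
      rw [RingHom.comp_apply, hφapp, ← IsScalarTower.algebraMap_apply k K kbar, hfix]
    have hL : eval₂Hom φ β ((aeval fun s : Fin n => ∑ i : Fin d, C (u i) * X (s, i)) (F t))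
        = eval₂ φ (fun s : Fin n => ∑ i : Fin d, β (s, i) * (σ ^ (j : ℕ))
            (algebraMap K kbar (u i))) (F t) := by
      rw [aeval_def, algebraMap_eq]
      rw [eval₂_comp_left (eval₂Hom φ β) C
        (fun s : Fin n => ∑ i : Fin d, C (u i) * X (s, i)) (F t), eval₂Hom_comp_C]
      congr 1
      funext s
      simp only [Function.comp_apply, coe_eval₂Hom, eval₂_sum, eval₂_mul, eval₂_C, eval₂_X]
      exact Finset.sum_congr rfl fun i _ => by rw [hφapp]; exact mul_comm _ _
    have hR : eval₂Hom φ β (∑ i : Fin d, C (u i) * MvPolynomial.map (algebraMap k K) (f t i))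
        = ∑ i : Fin d,
            (σ ^ (j : ℕ)) (algebraMap K kbar (u i)) * eval₂ (algebraMap k kbar) β (f t i) := by
      rw [map_sum]
      refine Finset.sum_congr rfl fun i _ => ?_
      rw [map_mul, eval₂Hom_C]
      congr 1
      show eval₂ φ β (MvPolynomial.map (algebraMap k K) (f t i)) = _
      rw [eval₂_map, hφk]
    rw [← hL, ← hR, hf t]
  refine ⟨?_, ?_, ?_⟩
  · -- MapsTo
    intro β hβ j t
    exact (key β t j).trans (Finset.sum_eq_zero fun i _ => by rw [hβ t i, mul_zero])
  · -- InjOn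
    intro β hβ β' hβ' h
    funext p
    obtain ⟨s, i⟩ := p
    have hp : (fun i => β (s, i)) = fun i => β' (s, i) := by
      apply hMinj
      funext j
      have h1 := congrFun (congrFun h j) s
      simp only [Matrix.mulVec, dotProduct, hM, Matrix.of_apply]
      calc (∑ i, (σ ^ (j : ℕ)) (algebraMap K kbar (u i)) * β (s, i))
          = ∑ i, β (s, i) * (σ ^ (j : ℕ)) (algebraMap K kbar (u i)) :=
            Finset.sum_congr rfl fun i _ => mul_comm _ _
        _ = ∑ i, β' (s, i) * (σ ^ (j : ℕ)) (algebraMap K kbar (u i)) := h1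
        _ = ∑ i, (σ ^ (j : ℕ)) (algebraMap K kbar (u i)) * β' (s, i) :=
            Finset.sum_congr rfl fun i _ => mul_comm _ _
    exact congrFun hp i
  · -- SurjOn
    intro γ hγ
    choose x hx using fun s : Fin n => hMsurj (fun j => γ j s)
    have hδ : (fun (j : Fin d) (t : Fin n) => ∑ i, x t i * (σ ^ (j : ℕ)) (algebraMap K kbar (u i))) = γ := by
      funext j s
      have hxs := congrFun (hx s) j
      simp only [Matrix.mulVec, dotProduct, hM, Matrix.of_apply] at hxs
      rw [← hxs]
      exact Finset.sum_congr rfl fun i _ => mul_comm _ _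
    refine ⟨fun p => x p.1 p.2, ?_, hδ⟩
    intro t i
    have h0 : M.mulVec
        (fun i => eval₂ (algebraMap k kbar) (fun p : Fin n × Fin d => x p.1 p.2) (f t i)) = 0 := by
      funext j
      have hk := key (fun p : Fin n × Fin d => x p.1 p.2) t j
      have harg : (fun s : Fin n =>
          ∑ i : Fin d, x s i * (σ ^ (j : ℕ)) (algebraMap K kbar (u i))) = γ j := by
        funext s
        exact congrFun (congrFun hδ j) s
      rw [harg, hγ j t] at hk
      simp only [Matrix.mulVec, dotProduct, hM, Matrix.of_apply, Pi.zero_apply]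
      exact hk.symm
    have h1 : (fun i => eval₂ (algebraMap k kbar) (fun p : Fin n × Fin d => x p.1 p.2) (f t i))
        = fun _ => 0 := by
      apply hMinj
      rw [h0]
      funext j
      simp [Matrix.mulVec]
    exact congrFun h1 i
end

section
/- Let k be a field, K a field extension of k of degree d with basis u_1,…,u_d, and F_1,…,F_m ∈ K[x_1,…,x_n] with descents (f_{t1},…,f_{td}) for t = 1,…,m. Let V(K) = {α ∈ K^n : F_t(α) = 0 for all t} and V̂(k) = {(a_{tj}) ∈ k^{nd} : f_{ti}((a_{tj})) = 0 for all t, i}. Then the map sending α = (α_1,…,α_n) ∈ V(K) to its coordinate matrix (a_{tj}) ∈ k^{nd}, where α_t = Σ_{j=1}^d a_{tj}u_j, is a bijection from V(K) onto V̂(k). -/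
open MvPolynomial

private theorem stmt5_key {k K : Type*} [Field k] [Field K] [Algebra k K]
    {n d : ℕ} (u : Module.Basis (Fin d) k K)
    (P : MvPolynomial (Fin n) K)
    (g : Fin d → MvPolynomial (Fin n × Fin d) k)
    (h : aeval (fun s : Fin n => ∑ j : Fin d, C (u j) * X (s, j)) P
        = ∑ i : Fin d, C (u i) * MvPolynomial.map (algebraMap k K) (g i))
    (a : Fin n × Fin d → k) :
    eval (fun s => ∑ j : Fin d, a (s, j) • u j) P
      = ∑ i : Fin d, (eval a (g i)) • u i := by
  have h2 : ∀ q : MvPolynomial (Fin n × Fin d) k,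
      eval₂ (algebraMap k K) (fun p => algebraMap k K (a p)) q
        = algebraMap k K (eval a q) := by
    intro q
    have := eval₂_comp_left (algebraMap k K) (RingHom.id k) a q
    simp only [eval₂_id, RingHom.comp_id] at this
    exact this.symm
  have this := congrArg (eval (fun p : Fin n × Fin d => algebraMap k K (a p))) h
  rw [aeval_def, MvPolynomial.algebraMap_eq, ← eval_assoc] at this
  simp only [map_sum, eval_mul, eval_C, eval_map, h2] at this
  have hfun : (⇑(eval fun p : Fin n × Fin d => algebraMap k K (a p)) ∘
      fun s : Fin n => ∑ j : Fin d, C (u j) * X (s, j))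
      = fun s => ∑ j : Fin d, a (s, j) • u j := by
    funext s; simp [Algebra.smul_def, mul_comm]
  rw [hfun] at this
  rw [this]
  simp [Algebra.smul_def, mul_comm]

/-- The coordinate map `α ↦ (a_{tj})` is a bijection from `V(K)`
onto the descent variety `V̂(k)`. -/
theorem stmt_5 {k K : Type*} [Field k] [Field K] [Algebra k K]
    (n d m : ℕ) (u : Module.Basis (Fin d) k K)
    (F : Fin m → MvPolynomial (Fin n) K)
    (f : Fin m → Fin d → MvPolynomial (Fin n × Fin d) k)
    (hf : ∀ t : Fin m,
      aeval (fun s : Fin n => ∑ j : Fin d, C (u j) * X (s, j)) (F t)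
        = ∑ i : Fin d, C (u i) * MvPolynomial.map (algebraMap k K) (f t i)) :
    Set.BijOn
      (fun (α : Fin n → K) (p : Fin n × Fin d) => u.repr (α p.1) p.2)
      {α : Fin n → K | ∀ t : Fin m, eval α (F t) = 0}
      {a : Fin n × Fin d → k | ∀ t : Fin m, ∀ i : Fin d, eval a (f t i) = 0} := by
  refine ⟨?_, ?_, ?_⟩
  · intro α hα t i
    have hr : (fun s : Fin n => ∑ j : Fin d,
        (fun p : Fin n × Fin d => u.repr (α p.1) p.2) (s, j) • u j) = α := by
      funext s; exact u.sum_repr (α s)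
    have hk := stmt5_key u (F t) (f t) (hf t)
      (fun p : Fin n × Fin d => u.repr (α p.1) p.2)
    rw [hr, hα t] at hk
    have := Fintype.linearIndependent_iff.mp u.linearIndependent
      (fun i => eval (fun p : Fin n × Fin d => u.repr (α p.1) p.2) (f t i)) hk.symm
    exact this i
  · intro α₁ _ α₂ _ h
    funext s
    rw [← u.sum_repr (α₁ s), ← u.sum_repr (α₂ s)]
    refine Finset.sum_congr rfl fun j _ => ?_
    exact congrArg (· • u j) (congrFun h (s, j))
  · intro a ha
    refine ⟨fun s => ∑ j : Fin d, a (s, j) • u j, fun t => ?_, ?_⟩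
    · rw [stmt5_key u (F t) (f t) (hf t) a]
      simp only [Set.mem_setOf_eq] at ha
      simp [ha t]
    · funext p
      exact congrFun (u.repr_sum_self (fun j => a (p.1, j))) p.2
end

section
/- Let k be a finite field with q elements, K = F_{q^d} ⊆ k̄ the degree-d extension of k in an algebraic closure k̄, and u_1,…,u_d a basis of K over k. Let T = a·m be a nonconstant term in K[x_1,…,x_n], i.e. a ∈ K, a ≠ 0, and m a monomial of positive degree, and let T̂ = (f_1,…,f_d) be its descent with respect to u_1,…,u_d. Then the evaluation map k̄^{nd} → k̄^d, β ↦ (f_1(β),…,f_d(β)), is surjective. -/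
open MvPolynomial

/-- The evaluation map `k̄^{nd} → k̄^d` of the descent of a nonconstant
term `T = a·m` (with `a ≠ 0` and `m = ∏_{t=1}^D x_{c(t)}`, `D ≥ 1`) is surjective. -/
theorem stmt_9 {k K kbar : Type*} [Field k] [Fintype k] [Field K] [Field kbar]
    [Algebra k K] [Algebra K kbar] [Algebra k kbar] [IsScalarTower k K kbar]
    [IsAlgClosure k kbar]
    (n d D : ℕ) (hD : 1 ≤ D) (u : Module.Basis (Fin d) k K)
    (a : K) (ha : a ≠ 0) (c : Fin D → Fin n)
    (f : Fin d → MvPolynomial (Fin n × Fin d) k)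
    (hf : aeval (fun t : Fin n => ∑ j : Fin d, C (u j) * X (t, j))
            (C a * ∏ t : Fin D, (X (c t) : MvPolynomial (Fin n) K))
        = ∑ i : Fin d, C (u i) * MvPolynomial.map (algebraMap k K) (f i)) :
    Function.Surjective
      (fun (β : Fin n × Fin d → kbar) (i : Fin d) => eval₂ (algebraMap k kbar) β (f i)) := by
  classical
  haveI : FiniteDimensional k K := Module.Finite.of_basis u
  haveI : IsAlgClosed kbar := IsAlgClosure.isAlgClosed k
  have hcard : Fintype.card (K →ₐ[k] kbar) = d := by
    rw [AlgHom.card, Module.finrank_eq_card_basis u, Fintype.card_fin]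
  let σ : Fin d ≃ (K →ₐ[k] kbar) := (Fintype.equivFinOfCardEq hcard).symm
  -- the key identity satisfied by the descent, for every embedding σ and point β
  have key : ∀ (τ : K →ₐ[k] kbar) (β : Fin n × Fin d → kbar),
      ∑ i : Fin d, τ (u i) * eval₂ (algebraMap k kbar) β (f i)
        = τ a * ∏ t : Fin D, (∑ j : Fin d, τ (u j) * β (c t, j)) := by
    intro τ β
    have := congrArg (eval₂Hom (τ : K →+* kbar) β) hf
    simpa [map_sum, map_mul, map_prod, aeval_C, aeval_X, eval₂_map,
      AlgHom.comp_algebraMap, mul_comm] using this.symm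
  -- the matrix of embeddings applied to the basis
  set M : Matrix (Fin d) (Fin d) kbar := Matrix.of (fun r i => σ r (u i)) with hM
  have hdet : M.det ≠ 0 := by
    intro h
    obtain ⟨x, hx0, hx⟩ := Matrix.exists_vecMul_eq_zero_iff.2 h
    have hli : LinearIndependent kbar (fun r : Fin d => ((σ r : K →* kbar) : K → kbar)) := by
      refine (linearIndependent_monoidHom K kbar).comp
        (fun r => (σ r : K →* kbar)) (fun r r' hrr' => ?_)
      apply σ.injective
      ext y
      exact DFunLike.congr_fun hrr' y
    have h0 : ∑ r : Fin d, x r • ((σ r : K →* kbar) : K → kbar) = 0 := by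
      funext y
      have hy := u.sum_repr y
      have expand : ∀ r : Fin d, σ r y
          = ∑ j : Fin d, algebraMap k kbar (u.repr y j) * σ r (u j) := by
        intro r
        conv_lhs => rw [← hy]
        rw [map_sum]
        refine Finset.sum_congr rfl fun j _ => ?_
        rw [map_smul, Algebra.smul_def]
      have : ∑ r : Fin d, x r * σ r y = 0 := by
        calc ∑ r : Fin d, x r * σ r y
            = ∑ j : Fin d, algebraMap k kbar (u.repr y j)
                * ∑ r : Fin d, x r * σ r (u j) := by
              simp only [expand, Finset.mul_sum]
              rw [Finset.sum_comm]
              exact Finset.sum_congr rfl fun j _ =>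
                Finset.sum_congr rfl fun r _ => by ring
          _ = 0 := by
              refine Finset.sum_eq_zero fun j _ => ?_
              have := congrFun hx j
              simp only [Matrix.vecMul, dotProduct, Matrix.of_apply,
                Pi.zero_apply, hM] at this
              simp [this]
      simpa using this
    exact hx0 (funext fun r => Fintype.linearIndependent_iff.1 hli x h0 r)
  have hMunit : IsUnit M := (Matrix.isUnit_iff_isUnit_det M).2 (Ne.isUnit hdet)
  haveI : Invertible M := M.invertibleOfIsUnitDet (Ne.isUnit hdet)
  -- surjectivity
  intro w
  set t0 : Fin D := ⟨0, hD⟩ with ht0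
  set e0 : ℕ := (Finset.univ.filter (fun t : Fin D => c t = c t0)).card with he0
  have he0pos : 0 < e0 := Finset.card_pos.2 ⟨t0, by simp [he0]⟩
  set v : Fin d → kbar := M.mulVec w with hv
  have hroot : ∀ r : Fin d, ∃ lam : kbar, lam ^ e0 = v r / σ r a := fun r =>
    IsAlgClosed.exists_pow_nat_eq _ he0pos
  choose lam hlam using hroot
  have hσa : ∀ r : Fin d, σ r a ≠ 0 := fun r => by
    simpa using (map_ne_zero (σ r)).2 ha
  -- the target value of each linear form
  set Lgoal : Fin n → Fin d → kbar :=
    fun s => if s = c t0 then lam else fun _ => 1 with hLgoal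
  set β : Fin n × Fin d → kbar := fun p => M⁻¹.mulVec (Lgoal p.1) p.2 with hβ
  have hLin : ∀ (s : Fin n) (r : Fin d),
      (∑ j : Fin d, σ r (u j) * β (s, j)) = Lgoal s r := by
    intro s r
    have : M.mulVec (M⁻¹.mulVec (Lgoal s)) = Lgoal s := by
      rw [Matrix.mulVec_mulVec, Matrix.mul_nonsing_inv _ (Ne.isUnit hdet),
        Matrix.one_mulVec]
    have := congrFun this r
    simpa [Matrix.mulVec, dotProduct, hM, hβ] using this
  refine ⟨β, ?_⟩
  -- It suffices that M.mulVec (F β) = M.mulVec w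
  have hmain : M.mulVec (fun i => eval₂ (algebraMap k kbar) β (f i)) = M.mulVec w := by
    funext r
    have hk := key (σ r) β
    have hprod : (∏ t : Fin D, (∑ j : Fin d, σ r (u j) * β (c t, j))) = lam r ^ e0 := by
      calc (∏ t : Fin D, (∑ j : Fin d, σ r (u j) * β (c t, j)))
          = ∏ t : Fin D, (if c t = c t0 then lam r else 1) := by
            refine Finset.prod_congr rfl fun t _ => ?_
            rw [hLin (c t) r]
            by_cases h : c t = c t0 <;> simp [hLgoal, h]
        _ = lam r ^ e0 := by
            rw [Finset.prod_ite, Finset.prod_const, Finset.prod_const, one_pow, mul_one, he0]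
    have : M.mulVec (fun i => eval₂ (algebraMap k kbar) β (f i)) r
        = σ r a * lam r ^ e0 := by
      simp only [Matrix.mulVec, dotProduct, hM, Matrix.of_apply]
      rw [hk, hprod]
    rw [this, hlam r, mul_div_cancel₀ _ (hσa r)]
  have hinj := Matrix.mulVec_injective_of_invertible M
  exact funext fun i => congrFun (hinj hmain) i
end

section
/- Let k be a finite field with q elements, K = F_{q^d} the degree-d extension of k with basis u_1,…,u_d over k. Let T = a·m be a nonconstant term in K[x_1,…,x_n] (a ∈ K, a ≠ 0, m a monomial of positive degree) with descent T̂ = (f_1,…,f_d), and let Γ ∈ GL_d(k). If Γ·T̂ = T̂, i.e. Σ_{i=1}^d Γ_{ji} f_i = f_j for all j, then Γ is the identity matrix. -/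
open MvPolynomial

theorem coeff_aux_10 {K : Type*} [Field K] (p m e : ℕ) [Fact p.Prime] [CharP K p]
    (he : 1 ≤ e) (τ : K) :
    ((Polynomial.C τ * Polynomial.X + 1) ^ (p ^ m * e)).coeff (p ^ m)
      = e * τ ^ p ^ m := by
  have hq : p ^ m ≠ 0 := pow_ne_zero _ (Fact.out : p.Prime).ne_zero
  rw [pow_mul, add_pow_char_pow, one_pow, mul_pow, ← Polynomial.C_pow, add_pow]
  rw [Polynomial.finset_sum_coeff]
  rw [Finset.sum_eq_single 1]
  · rw [pow_one, one_pow, mul_one, Nat.choose_one_right, ← Polynomial.C_eq_natCast,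
      Polynomial.coeff_mul_C, Polynomial.coeff_C_mul, Polynomial.coeff_X_pow, if_pos rfl,
      mul_one, mul_comm]
  · intro i hi hne
    rw [one_pow, mul_one, mul_pow, ← Polynomial.C_pow, ← pow_mul]
    rw [← Polynomial.C_eq_natCast, Polynomial.coeff_mul_C, Polynomial.coeff_C_mul,
      ← pow_mul, Polynomial.coeff_X_pow, if_neg, mul_zero, zero_mul]
    intro hcon
    exact hne (Nat.eq_of_mul_eq_mul_left (Nat.pos_of_ne_zero hq) (by omega))
  · intro h1; exact absurd (Finset.mem_range.mpr (Nat.lt_succ_of_le he)) h1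

/-- If `Γ ∈ GL_d(k)` fixes the descent of a nonconstant term
`T = a·m` (i.e. `Σ_i Γ_{ji} f_i = f_j` for all `j`), then `Γ` is the identity matrix. -/
theorem stmt_10 {k K : Type*} [Field k] [Fintype k] [Field K] [Algebra k K]
    (n d D : ℕ) (hD : 1 ≤ D) (u : Module.Basis (Fin d) k K)
    (a : K) (ha : a ≠ 0) (c : Fin D → Fin n)
    (f : Fin d → MvPolynomial (Fin n × Fin d) k)
    (hf : aeval (fun t : Fin n => ∑ j : Fin d, C (u j) * X (t, j))
            (C a * ∏ t : Fin D, (X (c t) : MvPolynomial (Fin n) K))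
        = ∑ i : Fin d, C (u i) * MvPolynomial.map (algebraMap k K) (f i))
    (Γ : Matrix (Fin d) (Fin d) k) (hΓ : IsUnit Γ)
    (h : ∀ j : Fin d, ∑ i : Fin d, C (Γ j i) * f i = f j) :
    Γ = 1 := by
  classical
  haveI : Finite K := Finite.of_equiv _ u.repr.toEquiv.symm
  set p := ringChar k with hpdef
  haveI : CharP k p := ringChar.charP k
  haveI hfact : Fact p.Prime := ⟨CharP.char_is_prime k p⟩
  have hι : Function.Injective (algebraMap k K) := (algebraMap k K).injective
  haveI : CharP K p := charP_of_injective_algebraMap hι p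
  obtain ⟨m, e, hpe, hDe⟩ :=
    Nat.exists_eq_pow_mul_and_not_dvd (Nat.one_le_iff_ne_zero.mp hD) p hfact.out.ne_one
  have he1 : 1 ≤ e := Nat.one_le_iff_ne_zero.mpr (by rintro rfl; exact hpe (dvd_zero p))
  set r := p ^ m with hrdef
  -- Frobenius-power map is surjective on finite K
  have hfr : Function.Surjective fun x : K => x ^ r := by
    apply Finite.surjective_of_injective
    intro x y hxy
    have : (x - y) ^ r = 0 := by
      rw [hrdef, sub_pow_char_pow]
      simpa [sub_eq_zero] using hxy
    simpa [sub_eq_zero] using pow_eq_zero_iff (pow_ne_zero m hfact.out.ne_zero) |>.mp this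
  have heK : (e : K) ≠ 0 := by
    rw [Ne, CharP.cast_eq_zero_iff K p]; exact hpe
  -- the key evaluation
  have key : ∀ z : K, ∀ j, (∑ i, Γ j i * u.repr z i) = u.repr z j := by
    have key1 : ∀ τ : K, ∃ w : Fin d → k,
        (∀ j, (∑ i, Γ j i * w i) = w j) ∧ (∑ i, w i • u i) = a * (e * τ ^ r) := by
      intro τ
      -- univariate specializations
      set ψ : MvPolynomial (Fin n × Fin d) k →ₐ[k] Polynomial k :=
        aeval (fun v : Fin n × Fin d =>
          Polynomial.C (u.repr τ v.2) * Polynomial.X + Polynomial.C (u.repr 1 v.2)) with hψdef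
      set Φ : MvPolynomial (Fin n × Fin d) K →ₐ[K] Polynomial K :=
        aeval (fun v : Fin n × Fin d =>
          Polynomial.C (algebraMap k K (u.repr τ v.2)) * Polynomial.X
            + Polynomial.C (algebraMap k K (u.repr 1 v.2))) with hΦdef
      have hsum : ∀ z : K, (∑ j, u j * algebraMap k K (u.repr z j)) = z := by
        intro z
        conv_rhs => rw [← u.sum_repr z]
        refine Finset.sum_congr rfl fun j _ => ?_
        rw [Algebra.smul_def, mul_comm]
      -- commuting Φ with map
      have hcomm : ∀ F : MvPolynomial (Fin n × Fin d) k,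
          Φ (MvPolynomial.map (algebraMap k K) F) = Polynomial.map (algebraMap k K) (ψ F) := by
        intro F
        induction F using MvPolynomial.induction_on with
        | C s => simp [hψdef, hΦdef, Polynomial.algebraMap_eq]
        | add F G hF hG => simp [map_add, hF, hG]
        | mul_X F v hF => simp only [map_mul, map_X, hF]; simp [hψdef, hΦdef]
      have hgt : ∀ t : Fin n,
          Φ (∑ j, C (u j) * X (t, j)) = Polynomial.C τ * Polynomial.X + 1 := by
        intro t
        have h1 : ∀ j : Fin d, Φ (C (u j) * X (t, j))
            = Polynomial.C (u j * algebraMap k K (u.repr τ j)) * Polynomial.X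
              + Polynomial.C (u j * algebraMap k K (u.repr 1 j)) := by
          intro j
          rw [map_mul, hΦdef]
          simp only [aeval_C, aeval_X, Polynomial.algebraMap_eq]
          rw [map_mul Polynomial.C, map_mul Polynomial.C]
          ring
        rw [map_sum, Finset.sum_congr rfl fun j _ => h1 j, Finset.sum_add_distrib,
          ← Finset.sum_mul, ← map_sum Polynomial.C, ← map_sum Polynomial.C, hsum τ, hsum 1,
          Polynomial.C_1]
      -- apply Φ to hf
      have hf2 : Polynomial.C a * (Polynomial.C τ * Polynomial.X + 1) ^ D
          = ∑ i, Polynomial.C (u i) * Polynomial.map (algebraMap k K) (ψ (f i)) := by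
        have := congrArg Φ hf
        rw [map_sum] at this
        simp only [map_mul, hcomm] at this
        rw [← AlgHom.comp_apply, MvPolynomial.comp_aeval] at this
        simp only [map_mul, map_prod, aeval_X, aeval_C] at this
        rw [Finset.prod_congr rfl (fun t (_ : t ∈ Finset.univ) => hgt (c t))] at this
        simp only [hΦdef, aeval_C, Polynomial.algebraMap_eq, Finset.prod_const,
          Finset.card_univ, Fintype.card_fin] at this
        exact this
      set w : Fin d → k := fun i => (ψ (f i)).coeff r with hwdef
      refine ⟨w, ?_, ?_⟩
      · intro j
        have := congrArg (fun P => (ψ P).coeff r) (h j)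
        simpa [hwdef, map_sum, Polynomial.finset_sum_coeff, MvPolynomial.smul_eq_C_mul,
          map_smul] using this
      · have := congrArg (fun P => P.coeff r) hf2
        simp only [Polynomial.coeff_C_mul, Polynomial.finset_sum_coeff,
          Polynomial.coeff_map] at this
        rw [hDe, hrdef, coeff_aux_10 p m e he1 τ, ← hrdef] at this
        rw [this]
        refine Finset.sum_congr rfl fun i _ => ?_
        rw [Algebra.smul_def, mul_comm]
    intro z j
    obtain ⟨τ, hτ⟩ := hfr (z / (a * e))
    obtain ⟨w, hw1, hw2⟩ := key1 τ
    have hz : (∑ i, w i • u i) = z := by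
      rw [hw2]
      simp only at hτ
      rw [hτ, ← mul_assoc, mul_div_cancel₀]
      exact mul_ne_zero ha heK
    have : ⇑(u.repr z) = w := by rw [← hz, u.repr_sum_self]
    rw [this]
    exact hw1 j
  -- conclude
  ext j i
  have := key (u i) j
  rw [u.repr_self] at this
  simp only [Finsupp.single_apply] at this
  rw [Matrix.one_apply]
  rw [Finset.sum_eq_single i] at this
  · simpa [eq_comm] using this.symm
  · intro b _ hb; simp [Finsupp.single_apply, hb.symm]
  · intro hi; exact absurd (Finset.mem_univ i) hi
end

section
/- Let k be a finite field with q elements, K = F_{q^d} the degree-d extension of k with basis u_1,…,u_d over k. Let T = c·m be a nonconstant term in K[x_1,…,x_n] (c ∈ K, c ≠ 0, m a monomial of positive degree), let a ∈ K with a ≠ 0, and let Γ ∈ GL_d(k). Then Γ·T̂ equals the descent of a·T if and only if Γ = Γ_a^t, where Γ_a ∈ Mat_d(k) is the matrix of multiplication by a in the basis u_1,…,u_d. -/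
open MvPolynomial

lemma coeff_subst_mem_span {k K : Type*} [CommSemiring k] [CommSemiring K] [Algebra k K]
    {σ τ : Type*} (S : σ → MvPolynomial τ k) (P : MvPolynomial σ K) (ν : τ →₀ ℕ) :
    coeff ν (aeval (fun v => MvPolynomial.map (algebraMap k K) (S v)) P)
      ∈ Submodule.span k (Set.range fun μ => coeff μ P) := by
  set V := Submodule.span k (Set.range fun μ => coeff μ P) with hV
  rw [show ((aeval fun v => MvPolynomial.map (algebraMap k K) (S v)) P)
      = ∑ μ ∈ P.support, (aeval fun v => MvPolynomial.map (algebraMap k K) (S v))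
          (monomial μ (coeff μ P)) by rw [← map_sum]; exact congrArg _ P.as_sum]
  rw [coeff_sum]
  refine Submodule.sum_mem _ (fun μ _ => ?_)
  rw [aeval_monomial]
  have h1 : (μ.prod fun i e => (MvPolynomial.map (algebraMap k K) (S i)) ^ e)
      = MvPolynomial.map (algebraMap k K) (μ.prod fun i e => (S i) ^ e) := by
    rw [Finsupp.prod, Finsupp.prod, map_prod]
    simp [map_pow]
  rw [h1]
  have h2 : algebraMap K (MvPolynomial τ K) (coeff μ P) = C (coeff μ P) := rfl
  rw [h2, coeff_C_mul, coeff_map]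
  rw [mul_comm, ← Algebra.smul_def]
  exact Submodule.smul_mem _ _ (Submodule.subset_span ⟨μ, rfl⟩)

lemma coeff_descent_sum {k K : Type*} [CommSemiring k] [CommSemiring K] [Algebra k K]
    {σ : Type*} {d : ℕ} (w : Fin d → K) (h : Fin d → MvPolynomial σ k) (μ : σ →₀ ℕ) :
    coeff μ (∑ i : Fin d, C (w i) * MvPolynomial.map (algebraMap k K) (h i))
      = ∑ i : Fin d, coeff μ (h i) • w i := by
  rw [coeff_sum]
  refine Finset.sum_congr rfl fun i _ => ?_
  rw [coeff_C_mul, coeff_map, Algebra.smul_def, mul_comm]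

lemma descent_unique {k K : Type*} [Field k] [Field K] [Algebra k K]
    {σ : Type*} {d : ℕ} (u : Module.Basis (Fin d) k K) (h h' : Fin d → MvPolynomial σ k)
    (H : ∑ i : Fin d, C (u i) * MvPolynomial.map (algebraMap k K) (h i)
       = ∑ i : Fin d, C (u i) * MvPolynomial.map (algebraMap k K) (h' i)) :
    ∀ i, h i = h' i := by
  intro i
  ext μ
  have h2 := congrArg (coeff μ) H
  rw [coeff_descent_sum, coeff_descent_sum] at h2
  have h3 : u.equivFun.symm (fun i => coeff μ (h i)) = u.equivFun.symm (fun i => coeff μ (h' i)) := by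
    rw [Module.Basis.equivFun_symm_apply, Module.Basis.equivFun_symm_apply]
    exact h2
  exact congrFun (u.equivFun.symm.injective h3) i

lemma indep_of_span {k K : Type*} [Field k] [Field K] [Algebra k K]
    {σ : Type*} {d : ℕ} (u : Module.Basis (Fin d) k K) (P : MvPolynomial σ K)
    (hspan : Submodule.span k (Set.range fun μ => coeff μ P) = ⊤)
    (f : Fin d → MvPolynomial σ k)
    (hf : P = ∑ i : Fin d, C (u i) * MvPolynomial.map (algebraMap k K) (f i))
    (b : Fin d → k) (hb : ∑ i : Fin d, C (b i) * f i = 0) : ∀ i, b i = 0 := by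
  set φ : K →ₗ[k] k := ∑ i : Fin d, b i • u.coord i with hφ
  have hφu : ∀ i, φ (u i) = b i := by
    intro i
    simp [hφ, LinearMap.sum_apply, Module.Basis.coord_apply, Module.Basis.repr_self,
      Finsupp.single_apply, eq_comm]
  have hφP : ∀ μ, φ (coeff μ P) = 0 := by
    intro μ
    rw [hf, coeff_descent_sum, map_sum]
    have h4 : ∀ i, coeff μ (C (b i) * f i) = b i * coeff μ (f i) := fun i => coeff_C_mul μ _ _
    have h5 := congrArg (coeff μ) hb
    rw [coeff_sum] at h5
    simp only [h4, coeff_zero] at h5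
    calc ∑ i : Fin d, φ (coeff μ (f i) • u i) = ∑ i : Fin d, b i * coeff μ (f i) := by
          refine Finset.sum_congr rfl fun i _ => ?_
          rw [map_smul, hφu, smul_eq_mul, mul_comm]
      _ = 0 := h5
  have hker : φ = 0 := by
    have : Submodule.span k (Set.range fun μ => coeff μ P) ≤ LinearMap.ker φ := by
      rw [Submodule.span_le]
      rintro x ⟨μ, rfl⟩
      exact hφP μ
    rw [hspan, top_le_iff] at this
    ext x
    exact LinearMap.mem_ker.mp (this ▸ Submodule.mem_top)
  intro i
  rw [← hφu i, hker, LinearMap.zero_apply]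
lemma span_coeffs {k K : Type*} [Field k] [Fintype k] [Field K] [Algebra k K]
    (n d D : ℕ) (hD : 1 ≤ D) (u : Module.Basis (Fin d) k K)
    (cc : K) (hcc : cc ≠ 0) (cm : Fin D → Fin n) :
    Submodule.span k (Set.range fun μ =>
      coeff μ (aeval (fun t : Fin n => ∑ j : Fin d, C (u j) * X (t, j))
        (C cc * ∏ t : Fin D, (X (cm t) : MvPolynomial (Fin n) K)))) = ⊤ := by
  classical
  -- basic setup
  have : Nonempty (Fin d) := u.index_nonempty
  haveI : NeZero d := ⟨Nat.pos_of_ne_zero (by rintro rfl; exact (Fin.pos_iff_nonempty.mpr this).ne' rfl) |>.ne'⟩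
  set p := ringChar k with hpdef
  haveI hp : Fact p.Prime := ⟨CharP.char_is_prime k p⟩
  haveI : CharP K p := charP_of_injective_algebraMap (algebraMap k K).injective p
  set sub : Fin n → MvPolynomial (Fin n × Fin d) K :=
    fun t => ∑ j : Fin d, C (u j) * X (t, j) with hsub
  set P : MvPolynomial (Fin n × Fin d) K :=
    aeval sub (C cc * ∏ t : Fin D, (X (cm t) : MvPolynomial (Fin n) K)) with hPdef
  have hP : P = C cc * ∏ t : Fin D, sub (cm t) := by
    rw [hPdef, map_mul, aeval_C, map_prod]
    simp only [aeval_X]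
    rfl
  set t0 : Fin D := ⟨0, hD⟩ with ht0
  set s0 : Fin n := cm t0 with hs0
  set e : ℕ := (Finset.univ.filter fun t => cm t = s0).card with he
  set e' : ℕ := (Finset.univ.filter fun t => ¬ cm t = s0).card with he'
  have he0 : e ≠ 0 := by
    rw [he]
    refine Finset.card_ne_zero_of_mem (a := t0) ?_
    simp [hs0]
  obtain ⟨v, m, hm, hem⟩ := Nat.exists_eq_pow_mul_and_not_dvd he0 p hp.out.ne_one
  have hm0 : m ≠ 0 := by rintro rfl; exact hm (dvd_zero p)
  have hpv : 0 < p ^ v := pow_pos hp.out.pos v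
  have hmk : (m : k) ≠ 0 := by
    intro h
    exact hm ((CharP.cast_eq_zero_iff k p m).mp h)
  -- the single key coefficient computation
  have key : ∀ j0 : Fin d,
      cc * u 0 ^ e' * (u 0 ^ (p ^ v * (m - 1)) * (u j0 ^ p ^ v * (m : K)))
        ∈ Submodule.span k (Set.range fun μ => coeff μ P) := by
    intro j0
    set S : (Fin n × Fin d) → MvPolynomial (Fin 2) k := fun q =>
      if q.1 = s0 then ((if q.2 = 0 then X 0 else 0) + (if q.2 = j0 then X 1 else 0))
      else (if q.2 = 0 then 1 else 0) with hS
    set Φ := aeval (R := K) (fun q => MvPolynomial.map (algebraMap k K) (S q)) with hΦ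
    have hL : ∀ s : Fin n, Φ (sub s) =
        if s = s0 then (C (u 0) * X 0 + C (u j0) * X 1) else C (u 0) := by
      intro s
      rw [hsub]
      simp only [map_sum, map_mul, hΦ, aeval_C, aeval_X, hS]
      by_cases hss : s = s0
      · rw [if_pos hss]
        simp [hss, apply_ite (MvPolynomial.map (algebraMap k K)), mul_add,
          Finset.sum_add_distrib, mul_ite, mul_zero, Finset.sum_ite_eq']
      · rw [if_neg hss]
        simp [hss, apply_ite (MvPolynomial.map (algebraMap k K)), mul_ite, mul_zero,
          Finset.sum_ite_eq']
    have hΦP : Φ P = C cc * ((C (u 0) * X 0 + C (u j0) * X 1) ^ e * C (u 0) ^ e') := by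
      rw [hP, map_mul]
      have : Φ (C cc) = C cc := aeval_C _ _
      rw [this, map_prod]
      congr 1
      calc (∏ t : Fin D, Φ (sub (cm t)))
          = ∏ t : Fin D, (if cm t = s0 then (C (u 0) * X 0 + C (u j0) * X 1) else C (u 0)) :=
            Finset.prod_congr rfl fun t _ => hL (cm t)
        _ = _ := by
            rw [Finset.prod_ite, Finset.prod_const, Finset.prod_const]
    set ν : Fin 2 →₀ ℕ := Finsupp.single 0 ((m - 1) * p ^ v)
        + Finsupp.single 1 ((m - (m - 1)) * p ^ v) with hν
    have hcoeff : coeff ν (Φ P)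
        = (cc * u 0 ^ e') * ((u 0 ^ p ^ v) ^ (m - 1) * ((u j0 ^ p ^ v) ^ (m - (m - 1))
            * (m.choose (m - 1) : K))) := by
      rw [hΦP, hem, pow_mul, add_pow_char_pow, mul_pow, mul_pow, ← C_pow, ← C_pow, add_pow]
      simp only [X_pow_eq_monomial, C_mul_monomial, mul_one, monomial_pow, monomial_mul,
        Finsupp.smul_single, smul_eq_mul]
      have hterm : ∀ x : ℕ,
          (monomial (Finsupp.single (0 : Fin 2) (x * p ^ v) + Finsupp.single 1 ((m - x) * p ^ v))
              ((u 0 ^ p ^ v) ^ x * (u j0 ^ p ^ v) ^ (m - x))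
            * ((m.choose x : ℕ) : MvPolynomial (Fin 2) K))
          = monomial (Finsupp.single (0 : Fin 2) (x * p ^ v) + Finsupp.single 1 ((m - x) * p ^ v))
              ((u 0 ^ p ^ v) ^ x * (u j0 ^ p ^ v) ^ (m - x) * (m.choose x : K)) := by
        intro x
        rw [show ((m.choose x : ℕ) : MvPolynomial (Fin 2) K) = C ((m.choose x : ℕ) : K) by
          push_cast; rfl]
        rw [mul_comm, C_mul_monomial]
        congr 1
        ring
      simp only [hterm]
      rw [← C_pow, mul_comm _ (C (u 0 ^ e')), ← mul_assoc, ← C_mul, coeff_C_mul, coeff_sum]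
      rw [Finset.sum_eq_single_of_mem (m - 1)
        (Finset.mem_range.mpr (by omega)) ?side]
      case side =>
        intro x _ hx
        rw [coeff_monomial, if_neg]
        intro h
        have h0 := DFunLike.congr_fun h (0 : Fin 2)
        rw [hν] at h0
        simp only [Finsupp.add_apply, Finsupp.single_apply, if_pos rfl,
          if_neg (show ¬(1 : Fin 2) = 0 by decide), add_zero] at h0
        exact hx (Nat.eq_of_mul_eq_mul_right hpv h0)
      rw [coeff_monomial, if_pos (by rw [hν])]
      ring
    have hmem := coeff_subst_mem_span S P ν
    rw [← hΦ] at hmem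
    have hchoose : m.choose (m - 1) = m := by
      obtain ⟨mm, rfl⟩ := Nat.exists_eq_succ_of_ne_zero hm0
      simp [Nat.choose_succ_self_right]
    rw [hcoeff, Nat.sub_sub_self (Nat.one_le_iff_ne_zero.mpr hm0), pow_one, ← pow_mul,
      hchoose] at hmem
    exact hmem
  -- rescale by m⁻¹
  have hmK : (m : K) ≠ 0 := by
    rw [← map_natCast (algebraMap k K) m]
    exact fun h => hmk ((map_eq_zero _).mp h)
  set c' : K := cc * u 0 ^ e' * u 0 ^ (p ^ v * (m - 1)) with hc'
  have key2 : ∀ j0 : Fin d, c' * u j0 ^ p ^ v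
      ∈ Submodule.span k (Set.range fun μ => coeff μ P) := by
    intro j0
    have h1 := Submodule.smul_mem _ ((m : k)⁻¹) (key j0)
    rw [Algebra.smul_def, map_inv₀, map_natCast] at h1
    have heq : c' * u j0 ^ p ^ v
        = (m : K)⁻¹ * (cc * u 0 ^ e' * (u 0 ^ (p ^ v * (m - 1)) * (u j0 ^ p ^ v * (m : K)))) := by
      field_simp [hc']
      ring
    rw [heq]
    exact h1
  have hc'0 : c' ≠ 0 :=
    mul_ne_zero (mul_ne_zero hcc (pow_ne_zero _ (u.ne_zero 0))) (pow_ne_zero _ (u.ne_zero 0))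
  rw [eq_top_iff]
  rintro z -
  haveI : Finite K := Finite.of_equiv _ u.equivFun.toEquiv.symm
  have hsurj : Function.Surjective fun x : K => x ^ p ^ v := by
    have hinj : Function.Injective fun x : K => x ^ p ^ v := by
      intro x y hxy
      have h0 : (x - y) ^ p ^ v = 0 := by
        rw [sub_pow_char_pow]
        simp only at hxy
        rw [hxy, sub_self]
      have := (pow_eq_zero_iff hpv.ne').mp h0
      exact sub_eq_zero.mp this
    exact Finite.injective_iff_surjective.mp hinj
  obtain ⟨y, hy⟩ := hsurj (c'⁻¹ * z)
  simp only at hy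
  have hz : z = c' * y ^ p ^ v := by
    rw [hy]
    field_simp
  have hy2 : y ^ p ^ v = ∑ i : Fin d, (u.repr y i) ^ p ^ v • (u i) ^ p ^ v := by
    conv_lhs => rw [← u.sum_repr y]
    rw [sum_pow_char_pow]
    exact Finset.sum_congr rfl fun i _ => smul_pow ..
  rw [hz, hy2, Finset.mul_sum]
  refine Submodule.sum_mem _ fun i _ => ?_
  rw [mul_smul_comm]
  exact Submodule.smul_mem _ _ (key2 i)

/-- For a nonconstant term `T = c·m` and `a ≠ 0`, a matrix
`Γ ∈ GL_d(k)` satisfies `Γ·T̂ = (a·T)^` if and only if `Γ = Γ_a^t`, where `Γ_a` is the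
matrix of multiplication by `a` in the basis `u`. -/
theorem stmt_11 {k K : Type*} [Field k] [Fintype k] [Field K] [Algebra k K]
    (n d D : ℕ) (hD : 1 ≤ D) (u : Module.Basis (Fin d) k K)
    (cc : K) (hcc : cc ≠ 0) (cm : Fin D → Fin n)
    (a : K) (ha : a ≠ 0)
    (Γa : Matrix (Fin d) (Fin d) k)
    (hΓa : ∀ i : Fin d, a * u i = ∑ j : Fin d, Γa i j • u j)
    (f : Fin d → MvPolynomial (Fin n × Fin d) k)
    (hf : aeval (fun t : Fin n => ∑ j : Fin d, C (u j) * X (t, j))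
            (C cc * ∏ t : Fin D, (X (cm t) : MvPolynomial (Fin n) K))
        = ∑ i : Fin d, C (u i) * MvPolynomial.map (algebraMap k K) (f i))
    (g : Fin d → MvPolynomial (Fin n × Fin d) k)
    (hg : aeval (fun t : Fin n => ∑ j : Fin d, C (u j) * X (t, j))
            (C a * (C cc * ∏ t : Fin D, (X (cm t) : MvPolynomial (Fin n) K)))
        = ∑ i : Fin d, C (u i) * MvPolynomial.map (algebraMap k K) (g i))
    (Γ : Matrix (Fin d) (Fin d) k) (hΓ : IsUnit Γ) :
    (∀ j : Fin d, ∑ i : Fin d, C (Γ j i) * f i = g j) ↔ Γ = Γa.transpose := by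
  classical
  have hLHS : (aeval (fun t : Fin n => ∑ j : Fin d, C (u j) * X (t, j)))
        (C a * (C cc * ∏ t : Fin D, (X (cm t) : MvPolynomial (Fin n) K)))
      = C a * (aeval (fun t : Fin n => ∑ j : Fin d, C (u j) * X (t, j)))
          (C cc * ∏ t : Fin D, (X (cm t) : MvPolynomial (Fin n) K)) := by
    rw [map_mul, aeval_C, MvPolynomial.algebraMap_eq]
  have step : ∀ i : Fin d,
      ∑ jj : Fin d, C (u jj) * (C (algebraMap k K (Γa i jj))
          * MvPolynomial.map (algebraMap k K) (f i))
        = C (a * u i) * MvPolynomial.map (algebraMap k K) (f i) := by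
    intro i
    rw [hΓa i, map_sum, Finset.sum_mul]
    refine Finset.sum_congr rfl fun jj _ => ?_
    rw [Algebra.smul_def, map_mul]
    ring
  have hRHS : ∑ jj : Fin d, C (u jj) * MvPolynomial.map (algebraMap k K)
        (∑ i : Fin d, C (Γa i jj) * f i)
      = C a * (aeval (fun t : Fin n => ∑ j : Fin d, C (u j) * X (t, j)))
          (C cc * ∏ t : Fin D, (X (cm t) : MvPolynomial (Fin n) K)) := by
    simp only [map_sum, map_mul, map_C, Finset.mul_sum]
    rw [Finset.sum_comm]
    calc ∑ i : Fin d, ∑ jj : Fin d, C (u jj) * (C (algebraMap k K (Γa i jj))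
            * MvPolynomial.map (algebraMap k K) (f i))
        = ∑ i : Fin d, C (a * u i) * MvPolynomial.map (algebraMap k K) (f i) :=
          Finset.sum_congr rfl fun i _ => step i
      _ = C a * ∑ i : Fin d, C (u i) * MvPolynomial.map (algebraMap k K) (f i) := by
          rw [Finset.mul_sum]
          exact Finset.sum_congr rfl fun i _ => by rw [map_mul]; ring
      _ = _ := by rw [← hf, map_mul]
  have hg' : ∀ jj : Fin d, g jj = ∑ i : Fin d, C (Γa i jj) * f i := by
    refine descent_unique u g _ ?_
    rw [← hg, hLHS, hRHS]
  have hspan := span_coeffs n d D hD u cc hcc cm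
  constructor
  · intro hyp
    ext j i
    have h1 := hyp j
    rw [hg' j] at h1
    have hb : ∑ i' : Fin d, C (Γ j i' - Γa i' j) * f i' = 0 := by
      have h2 : ∑ i' : Fin d, (C (Γ j i') * f i' - C (Γa i' j) * f i') = 0 := by
        rw [Finset.sum_sub_distrib, h1, sub_self]
      simpa [map_sub, sub_mul] using h2
    have h3 := indep_of_span u _ hspan f hf (fun i' => Γ j i' - Γa i' j) hb i
    rw [Matrix.transpose_apply]
    exact sub_eq_zero.mp h3
  · rintro rfl j
    rw [hg' j]
    exact Finset.sum_congr rfl fun i _ => by rw [Matrix.transpose_apply]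
end

section
/- Let k be a finite field with q elements, K = F_{q^d} the degree-d extension of k with basis u_1,…,u_d over k. Let F ∈ K[x_1,…,x_n] be a polynomial that is not constant (it contains at least one nonconstant term with nonzero coefficient), let G ∈ K[x_1,…,x_n], and let Γ ∈ GL_d(k). If Γ·F̂ = Ĝ, where F̂ and Ĝ are the descents of F and G with respect to u_1,…,u_d, then there exists a ∈ K, a ≠ 0, such that G = a·F and Γ = Γ_a^t, where Γ_a ∈ Mat_d(k) is the matrix of multiplication by a in the basis u_1,…,u_d. -/
open MvPolynomial

section Stmt12Aux

variable {k K : Type*} [Field k] [Fintype k] [Field K] [Algebra k K]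

namespace MvPolynomial
lemma IsWeightedHomogeneous.pow' {σ R M : Type*} [CommSemiring R] [AddCommMonoid M]
    {w : σ → M} {φ : MvPolynomial σ R} {m : M}
    (h : IsWeightedHomogeneous w φ m) (e : ℕ) : IsWeightedHomogeneous w (φ ^ e) (e • m) := by
  induction e with
  | zero => simpa using isWeightedHomogeneous_one R w
  | succ e ih =>
      rw [pow_succ, succ_nsmul]
      exact ih.mul h
end MvPolynomial

lemma prod_monomial_one {σ ι R : Type*} [CommSemiring R] (s : Finset ι) (g : ι → (σ →₀ ℕ)) :
    (∏ i ∈ s, (monomial (g i) (1 : R))) = monomial (∑ i ∈ s, g i) 1 := by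
  classical
  induction s using Finset.induction with
  | empty => simp [monomial_zero']
  | insert _ _ hns ih =>
      rw [Finset.prod_insert hns, Finset.sum_insert hns, ih, monomial_mul, one_mul]

theorem aux_vanish (n d : ℕ) (u : Module.Basis (Fin d) k K) (m : Fin n →₀ ℕ) (t0 : Fin n)
    (hm : m t0 ≠ 0) (S : K →ₗ[k] K)
    (hS : ∀ e : (Fin n × Fin d) →₀ ℕ,
      S (coeff e (∏ t : Fin n,
        (∑ j : Fin d, C (u j) * X (t, j) : MvPolynomial (Fin n × Fin d) K) ^ m t)) = 0) :
    S = 0 := by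
  classical
  have hKnt : Nontrivial K := inferInstance
  haveI : Module.Finite k K := Module.Finite.of_basis u
  haveI : Finite K := Module.finite_of_finite k
  haveI : Fintype K := Fintype.ofFinite K
  haveI : Nonempty (Fin d) := u.index_nonempty
  have hd : 0 < d := Fin.pos_iff_nonempty.mpr ‹_›
  set q := Fintype.card k with hqdef
  have hq1 : 1 < q := Fintype.one_lt_card
  -- characteristic
  obtain ⟨p, hp⟩ := CharP.exists k
  haveI := hp
  haveI hpK : CharP K p := charP_of_injective_algebraMap (algebraMap k K).injective p
  obtain ⟨s, hps, hcard⟩ := FiniteField.card k p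
  haveI : Fact p.Prime := ⟨hps⟩
  -- Frobenius-type maps
  have hqpow : ∀ l : ℕ, q ^ l = p ^ (s * l) := by
    intro l; rw [hqdef, hcard, ← pow_mul]
  have hadd : ∀ (l : ℕ) (x y : K), (x + y) ^ q ^ l = x ^ q ^ l + y ^ q ^ l := by
    intro l x y
    rw [hqpow l]
    exact add_pow_char_pow (p := p) x y (↑s * l)
  have hq0 : ∀ l : ℕ, q ^ l ≠ 0 := fun l => pow_ne_zero l (by omega)
  -- the frobenius powers as ring homs
  set Rhom : ℕ → (K →+* K) := fun l =>
    { toFun := fun x => x ^ q ^ l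
      map_one' := one_pow _
      map_mul' := fun x y => mul_pow x y _
      map_zero' := zero_pow (hq0 l)
      map_add' := hadd l } with hRhom
  -- as k-linear maps
  have hsmul : ∀ (l : ℕ) (c : k) (x : K), (c • x) ^ q ^ l = c • x ^ q ^ l := by
    intro l c x
    rw [Algebra.smul_def, mul_pow, ← map_pow, FiniteField.pow_card_pow, Algebra.smul_def]
  set Llin : Fin d → (K →ₗ[k] K) := fun l =>
    { toFun := fun x => x ^ q ^ (l : ℕ)
      map_add' := hadd l
      map_smul' := fun c x => hsmul l c x } with hLlin
  -- distinctness of the power maps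
  have hcardK : Fintype.card K = q ^ d := by
    rw [Module.card_fintype u, Fintype.card_fin, hqdef]
  have hψinj : Function.Injective (fun l : Fin d => (powMonoidHom (q ^ (l : ℕ)) : K →* K)) := by
    have key : ∀ l l' : Fin d, (l : ℕ) < (l' : ℕ) →
        (powMonoidHom (q ^ (l : ℕ)) : K →* K) ≠ (powMonoidHom (q ^ (l' : ℕ)) : K →* K) := by
      intro l l' hlt hll
      obtain ⟨g, hg⟩ := IsCyclic.exists_generator (α := Kˣ)
      have horder : orderOf g = q ^ d - 1 := by
        rw [orderOf_eq_card_of_forall_mem_zpowers hg, Nat.card_eq_fintype_card,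
          Fintype.card_units, hcardK]
      have hgpow : (g : K) ^ q ^ (l : ℕ) = (g : K) ^ q ^ (l' : ℕ) := by
        have := congrArg (fun f : K →* K => f (g : K)) hll
        simpa [powMonoidHom] using this
      have hgu : g ^ q ^ (l : ℕ) = g ^ q ^ (l' : ℕ) := Units.ext (by push_cast [hgpow]; rfl)
      rw [pow_eq_pow_iff_modEq, horder] at hgu
      have hd2 : 2 ≤ d := by have := l'.isLt; omega
      have hqle : q ≤ q ^ (d - 1) := by
        calc q = q ^ 1 := (pow_one q).symm
        _ ≤ q ^ (d - 1) := Nat.pow_le_pow_right (by omega) (by omega)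
      have hq' : q * q ^ (d - 1) = q ^ d := by
        rw [← pow_succ']
        congr 1
        omega
      have h3 : q ^ (d - 1) < q ^ d - 1 := by
        have : 2 * q ^ (d - 1) ≤ q * q ^ (d - 1) := Nat.mul_le_mul_right _ (by omega)
        omega
      have h2 : q ^ (l' : ℕ) ≤ q ^ (d - 1) := Nat.pow_le_pow_right (by omega) (by omega)
      have h2' : q ^ (l : ℕ) ≤ q ^ (d - 1) := Nat.pow_le_pow_right (by omega) (by omega)
      have heq : q ^ (l : ℕ) % (q ^ d - 1) = q ^ (l' : ℕ) % (q ^ d - 1) := hgu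
      rw [Nat.mod_eq_of_lt (by omega), Nat.mod_eq_of_lt (by omega)] at heq
      have : (l : ℕ) = (l' : ℕ) := Nat.pow_right_injective (by omega) heq
      omega
    intro l l' hll
    by_contra hne
    rcases lt_trichotomy (l : ℕ) (l' : ℕ) with hlt | heq | hgt
    · exact key l l' hlt hll
    · exact hne (Fin.ext heq)
    · exact key l' l hgt hll.symm
  -- linear independence of the Frobenius-power linear maps over K
  have hLI : LinearIndependent K Llin := by
    have hmono : LinearIndependent K (fun f : K →* K => (f : K → K)) :=
      linearIndependent_monoidHom K K
    have hcomp : LinearIndependent K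
        (fun l : Fin d => ((powMonoidHom (q ^ (l : ℕ)) : K →* K) : K → K)) :=
      hmono.comp _ hψinj
    let coeLM : (K →ₗ[k] K) →ₗ[K] (K → K) :=
      { toFun := fun f => ⇑f
        map_add' := fun f g => rfl
        map_smul' := fun c f => rfl }
    have : (fun l : Fin d => ((powMonoidHom (q ^ (l : ℕ)) : K →* K) : K → K))
        = coeLM ∘ Llin := rfl
    rw [this] at hcomp
    exact LinearIndependent.of_comp coeLM hcomp
  -- finrank of Hom_k(K, K) over K is d
  have hfinrank : Module.finrank K (K →ₗ[k] K) = d := by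
    rw [Module.finrank_linearMap_self, Module.finrank_eq_card_basis u, Fintype.card_fin]
  have hspan : Submodule.span K (Set.range Llin) = ⊤ :=
    hLI.span_eq_top_of_card_eq_finrank (by rw [Fintype.card_fin, hfinrank])
  have hmem : S ∈ Submodule.span K (Set.range Llin) := by rw [hspan]; trivial
  rw [Submodule.mem_span_range_iff_exists_fun] at hmem
  obtain ⟨β, hβ⟩ := hmem
  set B : Fin n → MvPolynomial (Fin n × Fin d) K :=
    (fun t => ∑ j : Fin d, C (u j) * X (t, j)) with hB
  set P : MvPolynomial (Fin n × Fin d) K := ∏ t, B t ^ m t with hP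
  have hcoeff : ∀ e, ∑ l : Fin d, β l * (coeff e P) ^ q ^ (l : ℕ) = 0 := by
    intro e
    have h0 := hS e
    rw [← hβ] at h0
    simpa [Llin, LinearMap.sum_apply, LinearMap.smul_apply, smul_eq_mul, hB, hP] using h0
  have hQ : (∑ l : Fin d, C (β l) * MvPolynomial.map (Rhom (l : ℕ)) P) = 0 := by
    apply MvPolynomial.ext
    intro e
    rw [coeff_zero, coeff_sum]
    simp only [coeff_C_mul, coeff_map]
    simpa [Rhom] using hcoeff e
  set Mx : Matrix (Fin d) (Fin d) K := Matrix.of (fun l j => (u j) ^ q ^ (l : ℕ)) with hMx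
  have hrows : LinearIndependent K (fun l => Mx l) := by
    rw [Fintype.linearIndependent_iff]
    intro c hc
    have hzero : (∑ l, c l • Llin l) = 0 := by
      apply u.ext
      intro j
      have := congrFun hc j
      simpa [Llin, Mx, LinearMap.sum_apply, LinearMap.smul_apply, smul_eq_mul,
        Finset.sum_apply, Pi.smul_apply] using this
    exact Fintype.linearIndependent_iff.mp hLI c hzero
  have hMunit : IsUnit Mx := Matrix.linearIndependent_rows_iff_isUnit.mp hrows
  set N := Mx⁻¹ with hN
  have hMN : Mx * N = 1 := Matrix.mul_nonsing_inv _ ((Matrix.isUnit_iff_isUnit_det Mx).mp hMunit)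
  set Ψ : MvPolynomial (Fin n × Fin d) K →ₐ[K] MvPolynomial (Fin n × Fin d) K :=
    aeval (fun pr : Fin n × Fin d => ∑ l : Fin d, C (N pr.2 l) * X (pr.1, l)) with hΨ
  have hΨB : ∀ (t : Fin n) (l : Fin d),
      Ψ (MvPolynomial.map (Rhom (l : ℕ)) (B t)) = X (t, l) := by
    intro t l
    have hmap : MvPolynomial.map (Rhom (l : ℕ)) (B t)
        = ∑ j : Fin d, C ((u j) ^ q ^ (l : ℕ)) * X (t, j) := by
      rw [hB, map_sum]
      simp [Rhom]
    rw [hmap, map_sum]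
    have hterm : ∀ j : Fin d, Ψ (C ((u j) ^ q ^ (l : ℕ)) * X (t, j))
        = ∑ l' : Fin d, C (Mx l j * N j l') * X (t, l') := by
      intro j
      rw [map_mul, aeval_C, aeval_X, MvPolynomial.algebraMap_eq, Finset.mul_sum]
      simp [Mx, mul_assoc]
    rw [Finset.sum_congr rfl (fun j _ => hterm j), Finset.sum_comm]
    have hinner : ∀ l' : Fin d, ∑ j : Fin d, C (Mx l j * N j l') * X (t, l')
        = C ((Mx * N) l l') * X (t, l') := by
      intro l'
      rw [← Finset.sum_mul, ← map_sum, Matrix.mul_apply]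
    rw [Finset.sum_congr rfl (fun l' _ => hinner l'), hMN]
    simp [Matrix.one_apply]
  have hPmap : ∀ l : Fin d, Ψ (MvPolynomial.map (Rhom (l : ℕ)) P) =
      monomial (∑ t, Finsupp.single (t, l) (m t)) 1 := by
    intro l
    rw [hP, map_prod, map_prod]
    rw [Finset.prod_congr rfl (fun t _ => by rw [map_pow, map_pow, hΨB t l])]
    simp_rw [X_pow_eq_monomial]
    exact prod_monomial_one _ _
  have hEinj : ∀ l l' : Fin d,
      (∑ t, Finsupp.single (t, l') (m t)) = (∑ t, Finsupp.single (t, l) (m t)) → l' = l := by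
    intro l l' hE
    by_contra hne
    have h1 := congrArg (fun F : (Fin n × Fin d) →₀ ℕ => F (t0, l)) hE
    simp only [Finsupp.finset_sum_apply, Finsupp.single_apply] at h1
    rw [Finset.sum_eq_zero, Finset.sum_eq_single t0] at h1
    · rw [if_pos rfl] at h1
      exact hm h1.symm
    · intro t _ ht
      rw [if_neg (by simp [ht])]
    · intro h; exact absurd (Finset.mem_univ t0) h
    · intro t _
      rw [if_neg (by simp [hne])]
  have hβ0 : ∀ l : Fin d, β l = 0 := by
    intro l
    have h0 := congrArg Ψ hQ
    rw [map_sum, map_zero] at h0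
    rw [Finset.sum_congr rfl (fun l' _ => by
      rw [map_mul, aeval_C, MvPolynomial.algebraMap_eq, hPmap l', C_mul_monomial, mul_one])] at h0
    have h1 := congrArg (coeff (∑ t, Finsupp.single (t, l) (m t))) h0
    rw [coeff_sum, coeff_zero] at h1
    rw [Finset.sum_eq_single l] at h1
    · rwa [coeff_monomial, if_pos rfl] at h1
    · intro l' _ hne
      rw [coeff_monomial, if_neg (fun hE => hne (hEinj l l' hE))]
    · intro h; exact absurd (Finset.mem_univ l) h
  rw [← hβ]
  rw [Finset.sum_congr rfl (fun l _ => by rw [hβ0 l, zero_smul])]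
  exact Finset.sum_const_zero


end Stmt12Aux

/-- If `F` is nonconstant, `Γ ∈ GL_d(k)`, and `Γ·F̂ = Ĝ`, then there is
`a ∈ K`, `a ≠ 0`, with `G = a·F` and `Γ = Γ_a^t` (i.e. `a·u_i = Σ_j Γ_{ji} u_j`). -/
theorem stmt_12 {k K : Type*} [Field k] [Fintype k] [Field K] [Algebra k K]
    (n d : ℕ) (u : Module.Basis (Fin d) k K)
    (F G : MvPolynomial (Fin n) K) (hF : 0 < F.totalDegree)
    (f : Fin d → MvPolynomial (Fin n × Fin d) k)
    (hf : aeval (fun t : Fin n => ∑ j : Fin d, C (u j) * X (t, j)) F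
        = ∑ i : Fin d, C (u i) * MvPolynomial.map (algebraMap k K) (f i))
    (g : Fin d → MvPolynomial (Fin n × Fin d) k)
    (hg : aeval (fun t : Fin n => ∑ j : Fin d, C (u j) * X (t, j)) G
        = ∑ i : Fin d, C (u i) * MvPolynomial.map (algebraMap k K) (g i))
    (Γ : Matrix (Fin d) (Fin d) k) (hΓ : IsUnit Γ)
    (h : ∀ j : Fin d, ∑ i : Fin d, C (Γ j i) * f i = g j) :
    ∃ a : K, a ≠ 0 ∧ G = C a * F ∧
      ∀ i : Fin d, a * u i = ∑ j : Fin d, Γ j i • u j := by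
  classical
  haveI : Nonempty (Fin d) := u.index_nonempty
  have hd : 0 < d := Fin.pos_iff_nonempty.mpr ‹_›
  -- notation
  set B : Fin n → MvPolynomial (Fin n × Fin d) K :=
    (fun t => ∑ j : Fin d, C (u j) * X (t, j)) with hB
  set P : (Fin n →₀ ℕ) → MvPolynomial (Fin n × Fin d) K :=
    (fun m => ∏ t, B t ^ m t) with hP
  set w : Fin n × Fin d → (Fin n →₀ ℕ) := (fun pr => Finsupp.single pr.1 1) with hw
  set Φ : MvPolynomial (Fin n) K →ₐ[K] MvPolynomial (Fin n × Fin d) K := aeval B with hΦ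
  -- homogeneity
  have hBhom : ∀ t : Fin n, IsWeightedHomogeneous w (B t) (Finsupp.single t 1) := by
    intro t
    apply IsWeightedHomogeneous.sum
    intro j _
    have h0 := (isWeightedHomogeneous_C w (R := K) (u j)).mul
      (isWeightedHomogeneous_X K w (t, j))
    rw [zero_add] at h0
    exact h0
  have hPhom : ∀ m : Fin n →₀ ℕ, IsWeightedHomogeneous w (P m) m := by
    intro m
    have h0 := IsWeightedHomogeneous.prod Finset.univ (fun t => B t ^ m t)
      (fun t => m t • Finsupp.single t 1) (fun t _ => (hBhom t).pow' (m t))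
    have h1 : (∑ t, m t • Finsupp.single t (1 : ℕ)) = m := by
      simp_rw [Finsupp.smul_single, smul_eq_mul, mul_one]
      exact Finsupp.univ_sum_single m
    rwa [h1] at h0
  -- P m is nonzero
  have hPne : ∀ m : Fin n →₀ ℕ, P m ≠ 0 := by
    intro m
    rw [hP]
    apply Finset.prod_ne_zero_iff.mpr
    intro t _
    apply pow_ne_zero
    intro hBt
    have hco := congrArg (coeff (Finsupp.single (t, (⟨0, hd⟩ : Fin d)) 1)) hBt
    rw [coeff_zero, hB] at hco
    simp only [coeff_sum, coeff_C_mul, coeff_X'] at hco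
    rw [Finset.sum_eq_single (⟨0, hd⟩ : Fin d)] at hco
    · rw [if_pos rfl, mul_one] at hco
      exact u.ne_zero _ hco
    · intro j _ hj
      rw [if_neg, mul_zero]
      intro hsingle
      have h2 := Finsupp.single_left_injective (one_ne_zero) hsingle
      exact hj (Prod.ext_iff.mp h2).2
    · intro hnm; exact absurd (Finset.mem_univ _) hnm
  -- decomposition of coefficients of Φ H
  have key2 : ∀ (H : MvPolynomial (Fin n) K) (e : (Fin n × Fin d) →₀ ℕ),
      coeff e (Φ H) = coeff (Finsupp.weight w e) H * coeff e (P (Finsupp.weight w e)) := by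
    intro H e
    have hexp : Φ H = ∑ mm ∈ H.support, C (coeff mm H) * P mm := by
      conv_lhs => rw [H.as_sum]
      rw [map_sum]
      apply Finset.sum_congr rfl
      intro mm _
      rw [aeval_monomial, MvPolynomial.algebraMap_eq]
      congr 1
      rw [hP]
      exact Finsupp.prod_fintype _ _ (fun t => pow_zero _)
    rw [hexp, coeff_sum]
    simp only [coeff_C_mul]
    apply Finset.sum_eq_single
    · intro mm _ hmm
      have hz : coeff e (P mm) = 0 := by
        by_contra hnz
        exact hmm ((hPhom mm) hnz).symm
      rw [hz, mul_zero]
    · intro hnot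
      rw [notMem_support_iff.mp hnot, zero_mul]
  -- the linear map T
  set v : Fin d → K := (fun i => ∑ j, Γ j i • u j) with hv
  set T : K →ₗ[k] K := u.constr k v with hT
  have hTu : ∀ i, T (u i) = v i := fun i => u.constr_basis k v i
  -- key1
  have key1 : ∀ e : (Fin n × Fin d) →₀ ℕ, coeff e (Φ G) = T (coeff e (Φ F)) := by
    intro e
    have hFe : coeff e (Φ F) = ∑ i, coeff e (f i) • u i := by
      have h0 := congrArg (coeff e) hf
      rw [coeff_sum] at h0
      simp only [coeff_C_mul, coeff_map] at h0
      rw [hΦ] at h0 ⊢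
      rw [h0]
      apply Finset.sum_congr rfl
      intro i _
      rw [Algebra.smul_def, mul_comm]
    have hGe : coeff e (Φ G) = ∑ j, (∑ i, Γ j i * coeff e (f i)) • u j := by
      have h0 := congrArg (coeff e) hg
      rw [coeff_sum] at h0
      simp only [coeff_C_mul, coeff_map] at h0
      rw [hΦ, h0]
      apply Finset.sum_congr rfl
      intro j _
      rw [← h j, coeff_sum]
      simp only [coeff_C_mul]
      rw [Algebra.smul_def, mul_comm]
    rw [hFe, hGe, map_sum]
    rw [Finset.sum_congr rfl (fun j (_ : j ∈ Finset.univ) => Finset.sum_smul), Finset.sum_comm]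
    apply Finset.sum_congr rfl
    intro i _
    rw [map_smul, hTu, hv, Finset.smul_sum]
    apply Finset.sum_congr rfl
    intro j _
    rw [mul_comm, mul_smul]
  -- combined relation
  have key : ∀ e : (Fin n × Fin d) →₀ ℕ,
      coeff (Finsupp.weight w e) G * coeff e (P (Finsupp.weight w e))
        = T (coeff (Finsupp.weight w e) F * coeff e (P (Finsupp.weight w e))) := by
    intro e
    rw [← key2 F e, ← key2 G e]
    exact key1 e
  -- choose a monomial of F of positive degree
  have hFne : F.support.Nonempty := by
    rw [MvPolynomial.support_nonempty]
    intro hF0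
    rw [hF0, totalDegree_zero] at hF
    exact lt_irrefl 0 hF
  obtain ⟨mstar, hmem, hsum⟩ := Finset.exists_mem_eq_sup F.support hFne
    (fun m : Fin n →₀ ℕ => m.sum fun _ e => e)
  have hmstar_pos : 0 < mstar.sum fun _ e => e := by
    rw [MvPolynomial.totalDegree] at hF
    exact hsum ▸ hF
  obtain ⟨t0, hmt0⟩ : ∃ t0, mstar t0 ≠ 0 := by
    by_contra hall
    push_neg at hall
    have hz : mstar = 0 := Finsupp.ext (fun t => hall t)
    rw [hz] at hmstar_pos
    simp at hmstar_pos
  set c := coeff mstar F with hc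
  have hcne : c ≠ 0 := mem_support_iff.mp hmem
  set D := coeff mstar G with hD
  set S : K →ₗ[k] K := T ∘ₗ (LinearMap.mulLeft k c) - LinearMap.mulLeft k D with hS
  have hSv : ∀ e : (Fin n × Fin d) →₀ ℕ, S (coeff e (P mstar)) = 0 := by
    intro e
    by_cases hbe : Finsupp.weight w e = mstar
    · have hk := key e
      rw [hbe] at hk
      simp only [hS, LinearMap.sub_apply, LinearMap.comp_apply, LinearMap.mulLeft_apply]
      rw [← hk, sub_self]
    · have hz : coeff e (P mstar) = 0 := by
        by_contra hnz
        exact hbe (hPhom mstar hnz)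
      rw [hz]
      simp
  have hS0 : S = 0 := aux_vanish n d u mstar t0 hmt0 S (fun e => hSv e)
  have hTmul : ∀ z : K, T (c * z) = D * z := by
    intro z
    have h0 := LinearMap.ext_iff.mp hS0 z
    simp only [hS, LinearMap.sub_apply, LinearMap.comp_apply, LinearMap.mulLeft_apply,
      LinearMap.zero_apply] at h0
    exact sub_eq_zero.mp h0
  set a := D / c with ha
  have hTall : ∀ z : K, T z = a * z := by
    intro z
    have h0 := hTmul (c⁻¹ * z)
    rw [← mul_assoc, mul_inv_cancel₀ hcne, one_mul] at h0
    rw [h0, ha, div_eq_mul_inv]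
    ring
  have hvi : ∀ i : Fin d, a * u i = ∑ j : Fin d, Γ j i • u j :=
    fun i => (hTall (u i)).symm.trans (hTu i)
  have hane : a ≠ 0 := by
    intro ha0
    have hvz : ∀ i, (∑ j : Fin d, Γ j i • u j) = 0 := fun i => by
      rw [← hvi i, ha0, zero_mul]
    have hΓ0 : Γ = 0 := by
      ext jj ii
      have h0 := Fintype.linearIndependent_iff.mp u.linearIndependent
        (fun j => Γ j ii) (hvz ii) jj
      simpa using h0
    rw [hΓ0] at hΓ
    have hdet := (Matrix.isUnit_iff_isUnit_det (0 : Matrix (Fin d) (Fin d) k)).mp hΓ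
    rw [Matrix.det_zero] at hdet
    simp at hdet
  have hGF : G = C a * F := by
    apply MvPolynomial.ext
    intro mm
    rw [coeff_C_mul]
    obtain ⟨e, he⟩ := MvPolynomial.ne_zero_iff.mp (hPne mm)
    have hbe : Finsupp.weight w e = mm := hPhom mm he
    have hk := key e
    rw [hbe, hTall] at hk
    exact mul_right_cancel₀ he (hk.trans (mul_assoc a _ _).symm)
  exact ⟨a, hane, hGF, hvi⟩
end

section
/- Let k be a finite field with q elements, K = F_{q^d} ⊆ k̄ the degree-d extension of k in an algebraic closure k̄, u_1,…,u_d a basis of K over k, and σ the q-power Frobenius automorphism of k̄. Let α ∈ k̄ and let β ∈ k̄^d be the descent of α, i.e. the unique vector satisfying Σ_{j=1}^d β_j·σ^i(u_j) = σ^i(α) for all i = 0,…,d−1. Then α ∈ K if and only if β ∈ k^d; and in that case β = (a_1,…,a_d) is the coordinate vector of α, i.e. α = Σ_{j=1}^d a_j u_j with a_j ∈ k. -/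
/-- Let `β ∈ k̄^d` be the descent of `α ∈ k̄`. Then `α ∈ K` iff
`β ∈ k^d`, and in that case `β` is the coordinate vector of `α` in the basis `u`. -/
theorem stmt_15 {k K kbar : Type*} [Field k] [Fintype k] [Field K] [Field kbar]
    [Algebra k K] [Algebra K kbar] [Algebra k kbar] [IsScalarTower k K kbar]
    [IsAlgClosure k kbar]
    (σ : RingAut kbar) (hσ : ∀ x : kbar, σ x = x ^ Fintype.card k)
    (d : ℕ) (u : Module.Basis (Fin d) k K)
    (α : kbar) (β : Fin d → kbar)
    (hβ : ∀ i : Fin d,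
      ∑ j : Fin d, β j * (σ ^ (i : ℕ)) (algebraMap K kbar (u j)) = (σ ^ (i : ℕ)) α) :
    ((∃ a : K, algebraMap K kbar a = α) ↔ ∀ j : Fin d, ∃ c : k, algebraMap k kbar c = β j)
    ∧ ∀ a : K, algebraMap K kbar a = α →
        ∀ j : Fin d, β j = algebraMap k kbar (u.repr a j) := by
  classical
  set q := Fintype.card k with hqdef
  have hq1 : 1 < q := Fintype.one_lt_card
  haveI : Fintype K := Module.fintypeOfFintype u
  have hcardK : Fintype.card K = q ^ d := by
    rw [Module.card_fintype u, Fintype.card_fin]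
  have hmul : ∀ (a b : ℕ) (x : kbar), (σ ^ (a + b)) x = (σ ^ a) ((σ ^ b) x) := by
    intro a b x
    rw [pow_add]
    rfl
  -- powers of σ
  have hpow : ∀ (n : ℕ) (x : kbar), (σ ^ n) x = x ^ q ^ n := by
    intro n
    induction n with
    | zero => intro x; rw [pow_zero, pow_zero, pow_one]; rfl
    | succ n ih =>
      intro x
      have h := hmul n 1 x
      rw [pow_one] at h
      rw [h, hσ x, ih, ← pow_mul, pow_succ' q n]
  -- σ^n fixes k
  have hfix : ∀ (n : ℕ) (c : k), (σ ^ n) (algebraMap k kbar c) = algebraMap k kbar c := by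
    intro n c
    induction n with
    | zero => rw [pow_zero]; rfl
    | succ n ih =>
      have h := hmul n 1 (algebraMap k kbar c)
      rw [pow_one] at h
      rw [h, hσ, ← map_pow, FiniteField.pow_card, ih]
  -- key expansion
  have hexp : ∀ (i : ℕ) (x : K),
      (σ ^ i) (algebraMap K kbar x)
        = ∑ j : Fin d, algebraMap k kbar (u.repr x j)
            * (σ ^ i) (algebraMap K kbar (u j)) := by
    intro i x
    conv_lhs => rw [← u.sum_repr x]
    rw [map_sum, map_sum]
    refine Finset.sum_congr rfl fun j _ => ?_
    rw [Algebra.smul_def, map_mul, map_mul, ← IsScalarTower.algebraMap_apply, hfix]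
  -- the Moore matrix
  set M : Matrix (Fin d) (Fin d) kbar :=
    fun i j => (σ ^ (i : ℕ)) (algebraMap K kbar (u j)) with hM
  -- the characters
  set f : Fin d → (K →* kbar) :=
    fun i => (((σ ^ (i : ℕ) : kbar ≃+* kbar) : kbar →+* kbar).comp
      (algebraMap K kbar)).toMonoidHom with hf
  -- injectivity of f
  have hfinj : Function.Injective f := by
    have key : ∀ m : ℕ, (∀ x : K, (σ ^ m) (algebraMap K kbar x) = algebraMap K kbar x)
        → m ≠ 0 → d ≤ m := by
      intro m hm hm0
      obtain ⟨g, hg⟩ := IsCyclic.exists_generator (α := Kˣ)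
      have horder : orderOf g = q ^ d - 1 := by
        rw [orderOf_eq_card_of_forall_mem_zpowers hg, Nat.card_eq_fintype_card,
          Fintype.card_units, hcardK]
      have hK : (g : K) ^ q ^ m = (g : K) := by
        have := hm (g : K)
        rw [hpow, ← map_pow] at this
        exact (algebraMap K kbar).injective this
      have hgu : g ^ q ^ m = g := Units.ext (by rw [Units.val_pow_eq_pow_val]; exact hK)
      have hdvd : orderOf g ∣ q ^ m - 1 := by
        apply orderOf_dvd_of_pow_eq_one
        have h1 : 1 ≤ q ^ m := Nat.one_le_pow _ _ (by omega)
        rw [pow_sub g h1, hgu, pow_one, mul_inv_cancel]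
      have hpos : 0 < q ^ m - 1 := by
        have : 2 ≤ q ^ m := by
          calc 2 ≤ q := hq1
          _ = q ^ 1 := (pow_one q).symm
          _ ≤ q ^ m := Nat.pow_le_pow_right (by omega) (by omega)
        omega
      have hle := Nat.le_of_dvd hpos (horder ▸ hdvd)
      have h1d : 1 ≤ q ^ d := Nat.one_le_pow _ _ (by omega)
      have h1m : 1 ≤ q ^ m := Nat.one_le_pow _ _ (by omega)
      have : q ^ d ≤ q ^ m := by omega
      exact (Nat.pow_le_pow_iff_right hq1).mp this
    intro i i' hii'
    by_contra hne
    have main : ∀ a b : Fin d, (a : ℕ) < (b : ℕ) → f a = f b → False := by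
      intro a b hab hfab
      have hfixK : ∀ x : K, (σ ^ ((b : ℕ) - a)) (algebraMap K kbar x) = algebraMap K kbar x := by
        intro x
        have h1 : (σ ^ (a : ℕ)) ((σ ^ ((b : ℕ) - a)) (algebraMap K kbar x))
            = (σ ^ (a : ℕ)) (algebraMap K kbar x) := by
          rw [← hmul (a : ℕ) ((b : ℕ) - a), Nat.add_sub_cancel' (le_of_lt hab)]
          exact (DFunLike.congr_fun hfab x).symm
        exact (σ ^ (a : ℕ)).injective h1
      have h2 := key ((b : ℕ) - a) hfixK (by omega)
      have h3 : (b : ℕ) < d := b.isLt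
      omega
    rcases lt_or_gt_of_ne (fun h => hne (Fin.ext h) : (i : ℕ) ≠ i') with h | h
    · exact main i i' h hii'
    · exact main i' i h hii'.symm
  -- rows of M are linearly independent
  have hrows : LinearIndependent kbar (fun i => M i) := by
    rw [Fintype.linearIndependent_iff]
    intro c hc i
    have hz : ∀ j : Fin d, ∑ i : Fin d, c i * M i j = 0 := by
      intro j
      have := congr_fun hc j
      simpa [Finset.sum_apply, Pi.smul_apply, smul_eq_mul] using this
    have hcomb : ∑ i, c i • (⇑(f i) : K → kbar) = 0 := by
      funext x
      have hterm : ∀ i : Fin d, c i • (f i x) = ∑ j : Fin d,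
          algebraMap k kbar (u.repr x j) * (c i * M i j) := by
        intro i
        have hfx : f i x = (σ ^ (i : ℕ)) (algebraMap K kbar x) := rfl
        rw [smul_eq_mul, hfx, hexp, Finset.mul_sum]
        refine Finset.sum_congr rfl fun j _ => ?_
        ring
      simp only [Finset.sum_apply, Pi.smul_apply, Pi.zero_apply]
      rw [Finset.sum_congr rfl (fun i _ => hterm i), Finset.sum_comm]
      refine Finset.sum_eq_zero fun j _ => ?_
      rw [← Finset.mul_sum, hz j, mul_zero]
    have hli := (linearIndependent_monoidHom K kbar).comp f hfinj
    exact Fintype.linearIndependent_iff.mp hli c hcomb i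
  have hunit : IsUnit M := Matrix.linearIndependent_rows_iff_isUnit.mp hrows
  have hinj : Function.Injective M.mulVec := Matrix.mulVec_injective_iff_isUnit.mpr hunit
  -- uniqueness of solutions
  have huniq : ∀ δ : Fin d → kbar,
      (∀ i : Fin d, ∑ j : Fin d, δ j * M i j = 0) → δ = 0 := by
    intro δ hδ
    have h0 : M.mulVec δ = 0 := by
      funext i
      have h1 : M.mulVec δ i = ∑ j : Fin d, δ j * M i j := by
        simp [Matrix.mulVec, dotProduct, mul_comm]
      rw [h1, hδ i]
      rfl
    have := hinj (a₂ := 0) (by rw [h0, Matrix.mulVec_zero])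
    exact this
  -- part 2
  have part2 : ∀ a : K, algebraMap K kbar a = α →
      ∀ j : Fin d, β j = algebraMap k kbar (u.repr a j) := by
    intro a ha j
    set γ : Fin d → kbar := fun j => algebraMap k kbar (u.repr a j) with hγ
    have hγsol : ∀ i : Fin d, ∑ j : Fin d, γ j * M i j = (σ ^ (i : ℕ)) α := by
      intro i
      rw [← ha, hexp]
    have hdiff : (fun j => β j - γ j) = 0 := by
      apply huniq
      intro i
      simp only [sub_mul, Finset.sum_sub_distrib]
      rw [hγsol i, ← hβ i, sub_self]
    have := congr_fun hdiff j
    simpa [sub_eq_zero] using this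
  refine ⟨⟨?_, ?_⟩, part2⟩
  · rintro ⟨a, ha⟩ j
    exact ⟨u.repr a j, (part2 a ha j).symm⟩
  · intro hc
    have hd : 0 < d := by
      have : Nonempty (Fin d) := u.index_nonempty
      exact Fin.pos_iff_nonempty.mpr this
    choose c hcc using hc
    refine ⟨∑ j : Fin d, algebraMap k K (c j) * u j, ?_⟩
    have h0 := hβ ⟨0, hd⟩
    simp only [Fin.val_mk, pow_zero] at h0
    have h0' : ∑ j : Fin d, β j * algebraMap K kbar (u j) = α := h0
    rw [map_sum, ← h0']
    refine Finset.sum_congr rfl fun j _ => ?_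
    rw [map_mul, ← IsScalarTower.algebraMap_apply, hcc]
end

section
/- Let n ≥ m ≥ 1 and let R = ℤ[f_0,…,f_n, g_0,…,g_{m−1}] be the polynomial ring over ℤ in the indicated variables. In R[X], let F = Σ_{i=0}^n f_i X^i and G = X^m + Σ_{i=0}^{m−1} g_i X^i, and let Q and Rem be the quotient and remainder of F upon division by the monic polynomial G, so F = Q·G + Rem with deg Rem < m. Then for each i with 0 ≤ i ≤ n−m, the coefficient of X^{n−m−i} in Q is a polynomial of total degree at most i+1 in the variables f_0,…,f_n, g_0,…,g_{m−1}, and each coefficient of Rem has total degree at most n−m+2. -/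
open Polynomial

/-- Generic polynomial division: dividing
`F = Σ_{i=0}^n f_i X^i` by the monic `G = X^m + Σ_{i=0}^{m−1} g_i X^i` over
`ℤ[f_0,…,f_n,g_0,…,g_{m−1}]`, the coefficient of `X^{n−m−i}` in the quotient has total
degree at most `i+1`, and every coefficient of the remainder has total degree at most
`n−m+2`. -/
theorem stmt_19 (n m : ℕ) (hm : 1 ≤ m) (hmn : m ≤ n) :
    let F : Polynomial (MvPolynomial (Fin (n + 1) ⊕ Fin m) ℤ) :=
      ∑ i : Fin (n + 1), Polynomial.C (MvPolynomial.X (Sum.inl i)) * Polynomial.X ^ (i : ℕ)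
    let G : Polynomial (MvPolynomial (Fin (n + 1) ⊕ Fin m) ℤ) :=
      Polynomial.X ^ m +
        ∑ i : Fin m, Polynomial.C (MvPolynomial.X (Sum.inr i)) * Polynomial.X ^ (i : ℕ)
    (∀ i : ℕ, i ≤ n - m → ((F /ₘ G).coeff (n - m - i)).totalDegree ≤ i + 1)
    ∧ (∀ j : ℕ, ((F %ₘ G).coeff j).totalDegree ≤ n - m + 2) := by
  intro F G
  -- coefficients of F have total degree ≤ 1
  have hFdeg : ∀ j : ℕ, (F.coeff j).totalDegree ≤ 1 := by
    intro j
    have hF : F.coeff j = ∑ i : Fin (n + 1),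
        (if j = (i : ℕ) then MvPolynomial.X (Sum.inl i) else 0) := by
      simp [F, Polynomial.finset_sum_coeff, Polynomial.coeff_C_mul, Polynomial.coeff_X_pow]
    rw [hF]
    refine le_trans (MvPolynomial.totalDegree_finset_sum _ _) (Finset.sup_le fun i _ => ?_)
    split
    · exact le_of_eq (MvPolynomial.totalDegree_X _)
    · simp
  -- coefficients of G have total degree ≤ 1
  have hGdeg : ∀ b : ℕ, (G.coeff b).totalDegree ≤ 1 := by
    intro b
    have hG : G.coeff b = (if b = m then 1 else 0) + ∑ i : Fin m,
        (if b = (i : ℕ) then MvPolynomial.X (Sum.inr i) else 0) := by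
      simp [G, Polynomial.finset_sum_coeff, Polynomial.coeff_C_mul, Polynomial.coeff_X_pow,
        Polynomial.coeff_add]
    rw [hG]
    refine le_trans (MvPolynomial.totalDegree_add _ _) (max_le ?_ ?_)
    · split <;> simp
    · refine le_trans (MvPolynomial.totalDegree_finset_sum _ _) (Finset.sup_le fun i _ => ?_)
      split
      · exact le_of_eq (MvPolynomial.totalDegree_X _)
      · simp
  -- G is monic of degree m
  have hGsum : (∑ i : Fin m, Polynomial.C (MvPolynomial.X (Sum.inr i) :
      MvPolynomial (Fin (n + 1) ⊕ Fin m) ℤ) * Polynomial.X ^ (i : ℕ)).degree < ((m : ℕ) : WithBot ℕ) := by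
    refine lt_of_le_of_lt (Polynomial.degree_sum_le _ _) ?_
    rw [Finset.sup_lt_iff (by exact_mod_cast WithBot.bot_lt_coe m)]
    intro i _
    exact lt_of_le_of_lt (Polynomial.degree_C_mul_X_pow_le _ _)
      (by exact_mod_cast i.2)
  have hGmonic : G.Monic := Polynomial.monic_X_pow_add hGsum
  have hGdegEq : G.degree = (m : ℕ) := by
    rw [show G = Polynomial.X ^ m + _ from rfl,
      Polynomial.degree_add_eq_left_of_degree_lt (by rwa [Polynomial.degree_X_pow]),
      Polynomial.degree_X_pow]
  have hGnat : G.natDegree = m := Polynomial.natDegree_eq_of_degree_eq_some hGdegEq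
  have hGm : G.coeff m = 1 := by
    have := hGmonic.coeff_natDegree
    rwa [hGnat] at this
  -- F has natDegree ≤ n
  have hFnat : F.natDegree ≤ n := by
    refine Polynomial.natDegree_sum_le_of_forall_le _ _ fun i _ => ?_
    exact le_trans (Polynomial.natDegree_C_mul_le _ _)
      (by simpa using Nat.lt_succ_iff.mp i.2)
  -- vanishing of high quotient coefficients
  have hQ0 : ∀ a : ℕ, n - m < a → (F /ₘ G).coeff a = 0 := by
    intro a ha
    apply Polynomial.coeff_eq_zero_of_natDegree_lt
    calc (F /ₘ G).natDegree = F.natDegree - G.natDegree :=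
          Polynomial.natDegree_divByMonic F hGmonic
      _ ≤ n - m := by rw [hGnat]; omega
      _ < a := ha
  -- vanishing of high remainder coefficients
  have hR0 : ∀ j : ℕ, m ≤ j → (F %ₘ G).coeff j = 0 := by
    intro j hj
    apply Polynomial.coeff_eq_zero_of_degree_lt
    exact lt_of_lt_of_le (hGdegEq ▸ Polynomial.degree_modByMonic_lt F hGmonic)
      (by exact_mod_cast hj)
  -- the key coefficient identity
  have key : ∀ t : ℕ, F.coeff t = (F %ₘ G).coeff t +
      ∑ x ∈ Finset.HasAntidiagonal.antidiagonal t, G.coeff x.1 * (F /ₘ G).coeff x.2 := by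
    intro t
    conv_lhs => rw [← Polynomial.modByMonic_add_div F G]
    rw [Polynomial.coeff_add, Polynomial.coeff_mul]
  -- main induction for quotient coefficients
  have main : ∀ i : ℕ, ((F /ₘ G).coeff (n - m - i)).totalDegree ≤ i + 1 := by
    intro i
    induction i using Nat.strong_induction_on with
    | _ i IH =>
      set k := n - m - i with hk
      have hmem : ((m : ℕ), k) ∈ Finset.HasAntidiagonal.antidiagonal (m + k) := by simp
      have hQk : (F /ₘ G).coeff k = F.coeff (m + k) -
          ∑ x ∈ (Finset.HasAntidiagonal.antidiagonal (m + k)).erase (m, k),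
            G.coeff x.1 * (F /ₘ G).coeff x.2 := by
        have h := key (m + k)
        rw [hR0 (m + k) (Nat.le_add_right _ _), zero_add,
          ← Finset.add_sum_erase _ _ hmem, hGm, one_mul] at h
        exact eq_sub_of_add_eq h.symm
      rw [hQk]
      refine le_trans (MvPolynomial.totalDegree_sub _ _)
        (max_le (le_trans (hFdeg _) (by omega)) ?_)
      refine le_trans (MvPolynomial.totalDegree_finset_sum _ _) (Finset.sup_le ?_)
      rintro ⟨b, a⟩ hba
      rw [Finset.mem_erase, Finset.HasAntidiagonal.mem_antidiagonal] at hba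
      obtain ⟨hne, hsum⟩ := hba
      rcases lt_trichotomy b m with hb | hb | hb
      · have ha : k < a := by omega
        by_cases han : n - m < a
        · rw [hQ0 a han, mul_zero]; simp
        · have hj : n - m - a < i := by omega
          have hIH := IH _ hj
          rw [show n - m - (n - m - a) = a from by omega] at hIH
          calc (G.coeff b * (F /ₘ G).coeff a).totalDegree
              ≤ (G.coeff b).totalDegree + ((F /ₘ G).coeff a).totalDegree :=
                MvPolynomial.totalDegree_mul _ _
            _ ≤ 1 + ((n - m - a) + 1) := add_le_add (hGdeg b) hIH
            _ ≤ i + 1 := by omega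
      · exfalso
        apply hne
        have : a = k := by omega
        simp [hb, this]
      · rw [Polynomial.coeff_eq_zero_of_natDegree_lt (by omega : G.natDegree < b), zero_mul]
        simp
  -- remainder coefficients
  have rem : ∀ j : ℕ, ((F %ₘ G).coeff j).totalDegree ≤ n - m + 2 := by
    intro j
    by_cases hj : m ≤ j
    · rw [hR0 j hj]; simp
    · have h := key j
      have hRj : (F %ₘ G).coeff j = F.coeff j -
          ∑ x ∈ Finset.HasAntidiagonal.antidiagonal j, G.coeff x.1 * (F /ₘ G).coeff x.2 :=
        eq_sub_of_add_eq h.symm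
      rw [hRj]
      refine le_trans (MvPolynomial.totalDegree_sub _ _)
        (max_le (le_trans (hFdeg _) (by omega)) ?_)
      refine le_trans (MvPolynomial.totalDegree_finset_sum _ _) (Finset.sup_le ?_)
      rintro ⟨b, a⟩ hba
      by_cases han : n - m < a
      · rw [hQ0 a han, mul_zero]; simp
      · have hQa : ((F /ₘ G).coeff a).totalDegree ≤ (n - m - a) + 1 := by
          have := main (n - m - a)
          rwa [show n - m - (n - m - a) = a from by omega] at this
        calc (G.coeff b * (F /ₘ G).coeff a).totalDegree
            ≤ (G.coeff b).totalDegree + ((F /ₘ G).coeff a).totalDegree :=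
              MvPolynomial.totalDegree_mul _ _
          _ ≤ 1 + ((n - m - a) + 1) := add_le_add (hGdeg b) hQa
          _ ≤ n - m + 2 := by omega
  exact ⟨fun i _ => main i, rem⟩
end
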